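/- arXiv:2404.02714 — 3 statements merged into one kernel-verified Lean document; each statement's English description precedes it below -/
import Mathlib

section
/- Let n ≥ k ≥ 3 be positive integers such that (n-2)!/(k!(n-k)!) is an integer. Then Σ_{U ⊆ C([n],k)} ∏_{e ∈ C([n],2)} cos( (2π/(k(k-1))) · mult(e,U) ) = 0 if and only if n ≥ R(k), where the sum is over all subsets U of the set of k-element subsets of [n] and the product is over all 2-element subsets e of [n]. -/
open Finset SimpleGraph

lemma push_clique {M N a : ℕ} (f : Fin M ↪ Fin N) (G : SimpleGraph (Fin N))
    {s : Finset (Fin M)} (h : (G.comap f).IsNClique a s) :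
    G.IsNClique a (s.map f) := by
  have h2 := h.map (f := f)
  refine h2.mono ?_
  intro x y hxy
  obtain ⟨_, u, v, huv, rfl, rfl⟩ := hxy
  exact huv

lemma push_clique_compl {M N a : ℕ} (f : Fin M ↪ Fin N) (G : SimpleGraph (Fin N))
    {s : Finset (Fin M)} (h : (G.comap f)ᶜ.IsNClique a s) :
    Gᶜ.IsNClique a (s.map f) := by
  have h2 := h.map (f := f)
  refine h2.mono ?_
  intro x y hxy
  obtain ⟨_, u, v, huv, rfl, rfl⟩ := hxy
  obtain ⟨hne, hnadj⟩ := huv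
  exact ⟨fun hc => hne (f.injective hc), hnadj⟩

/-- embedding of `Fin M` into a finset of card ≥ M -/
lemma embed_into_finset {N M : ℕ} {A : Finset (Fin N)} (h : M ≤ A.card) :
    ∃ f : Fin M ↪ Fin N, ∀ i, f i ∈ A := by
  obtain ⟨B, hBA, hB⟩ := Finset.exists_subset_card_eq h
  let e : Fin M ≃ {x // x ∈ B} := (Fin.castOrderIso hB.symm).toEquiv.trans B.equivFin.symm
  exact ⟨⟨fun i => (e i : Fin N), fun i j hij => e.injective (Subtype.ext hij)⟩,
    fun i => hBA (e i).2⟩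

lemma ramsey_exists : ∀ m a b : ℕ, a + b ≤ m → ∃ N : ℕ, 0 < N ∧
    ∀ G : SimpleGraph (Fin N),
      (∃ s : Finset (Fin N), G.IsNClique a s) ∨ (∃ s : Finset (Fin N), Gᶜ.IsNClique b s) := by
  intro m
  induction m with
  | zero =>
    intro a b hab
    refine ⟨1, one_pos, fun G => ?_⟩
    obtain ⟨rfl, rfl⟩ : a = 0 ∧ b = 0 := by omega
    exact Or.inl ⟨∅, by simp⟩
  | succ m ih =>
    intro a b hab
    match a, b with
    | 0, b => exact ⟨1, one_pos, fun G => Or.inl ⟨∅, by simp⟩⟩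
    | a, 0 => exact ⟨1, one_pos, fun G => Or.inr ⟨∅, by simp⟩⟩
    | a + 1, b + 1 =>
      classical
      obtain ⟨Na, hNa, Ha⟩ := ih a (b + 1) (by omega)
      obtain ⟨Nb, hNb, Hb⟩ := ih (a + 1) b (by omega)
      refine ⟨Na + Nb, by omega, fun G => ?_⟩
      have hNpos : 0 < Na + Nb := by omega
      set v : Fin (Na + Nb) := ⟨0, hNpos⟩ with hv
      set A : Finset (Fin (Na + Nb)) := univ.filter (fun u => G.Adj v u) with hA
      set B : Finset (Fin (Na + Nb)) := univ.filter (fun u => u ≠ v ∧ ¬ G.Adj v u) with hB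
      have hcard : Na + Nb ≤ A.card + B.card + 1 := by
        have : univ ⊆ A ∪ B ∪ {v} := by
          intro u _
          simp only [hA, hB, Finset.mem_union, Finset.mem_filter, Finset.mem_univ, true_and,
            Finset.mem_singleton]
          by_cases h1 : u = v
          · exact Or.inr h1
          · by_cases h2 : G.Adj v u
            · exact Or.inl (Or.inl h2)
            · exact Or.inl (Or.inr ⟨h1, h2⟩)
        calc Na + Nb = (univ : Finset (Fin (Na + Nb))).card := by simp
          _ ≤ (A ∪ B ∪ {v}).card := Finset.card_le_card this
          _ ≤ (A ∪ B).card + 1 := by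
              simpa using Finset.card_union_le (A ∪ B) {v}
          _ ≤ A.card + B.card + 1 := by
              have := Finset.card_union_le A B; omega
      have hAB : Na ≤ A.card ∨ Nb ≤ B.card := by omega
      rcases hAB with hle | hle
      · obtain ⟨f, hf⟩ := embed_into_finset hle
        rcases Ha (G.comap f) with ⟨s, hs⟩ | ⟨s, hs⟩
        · -- a-clique among neighbors of v; add v
          have hmap := push_clique f G hs
          have hvadj : ∀ x ∈ s.map f, G.Adj v x := by
            intro x hx
            obtain ⟨i, _, rfl⟩ := Finset.mem_map.1 hx
            have := hf i
            simp only [hA, Finset.mem_filter] at this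
            exact this.2
          exact Or.inl ⟨insert v (s.map f), hmap.insert (fun x hx => hvadj x hx)⟩
        · exact Or.inr ⟨s.map f, push_clique_compl f G hs⟩
      · obtain ⟨f, hf⟩ := embed_into_finset hle
        rcases Hb (G.comap f) with ⟨s, hs⟩ | ⟨s, hs⟩
        · exact Or.inl ⟨s.map f, push_clique f G hs⟩
        · have hmap := push_clique_compl f G hs
          have hvadj : ∀ x ∈ s.map f, Gᶜ.Adj v x := by
            intro x hx
            obtain ⟨i, _, rfl⟩ := Finset.mem_map.1 hx
            have := hf i
            simp only [hB, Finset.mem_filter] at this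
            exact ⟨fun hc => this.2.1 hc.symm, fun hadj => this.2.2 hadj⟩
          exact Or.inr ⟨insert v (s.map f), hmap.insert (fun x hx => hvadj x hx)⟩

open Finset Complex

lemma swap_count {n : ℕ} (A B : Finset (Finset (Fin n))) :
    ∑ e ∈ A, (B.filter (fun S => e ⊆ S)).card = ∑ S ∈ B, (A.filter (fun e => e ⊆ S)).card := by
  classical
  simp_rw [Finset.card_filter]
  exact Finset.sum_comm

lemma one_add_exp (θ : ℝ) :
    1 + Complex.exp (↑θ * I) =
      Complex.exp (↑(θ / 2) * I) * (2 * (Real.cos (θ / 2) : ℂ)) := by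
  rw [Complex.ofReal_cos, Complex.two_cos, mul_add, ← Complex.exp_add, ← Complex.exp_add]
  have h1 : (↑(θ / 2) : ℂ) * I + ↑(θ / 2) * I = ↑θ * I := by push_cast; ring
  have h2 : (↑(θ / 2) : ℂ) * I + -↑(θ / 2) * I = 0 := by ring
  rw [h1, h2, Complex.exp_zero, add_comm]

lemma cos_prod_expand {n : ℕ} (E : Finset (Finset (Fin n))) (c : ℝ) (m : Finset (Fin n) → ℝ) :
    (∏ e ∈ E, ((Real.cos (c * m e) : ℝ) : ℂ)) =
      (1 / 2) ^ E.card * ∑ T ∈ E.powerset,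
        Complex.exp ((↑(c * ((∑ e ∈ T, m e) - ∑ e ∈ E \ T, m e)) : ℂ) * I) := by
  classical
  have step1 : ∀ e ∈ E, ((Real.cos (c * m e) : ℝ) : ℂ) =
      (1 / 2) * (Complex.exp ((↑(c * m e) : ℂ) * I) + Complex.exp (-((↑(c * m e) : ℂ) * I))) := by
    intro e _
    have h := Complex.two_cos (x := ((c * m e : ℝ) : ℂ))
    rw [neg_mul] at h
    rw [Complex.ofReal_cos]
    linear_combination h / 2
  rw [Finset.prod_congr rfl step1, Finset.prod_mul_distrib, Finset.prod_const]
  congr 1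
  rw [Finset.prod_add]
  refine Finset.sum_congr rfl ?_
  intro T hT
  rw [← Complex.exp_sum, ← Complex.exp_sum, ← Complex.exp_add]
  congr 1
  push_cast
  rw [Finset.sum_neg_distrib, ← sub_eq_add_neg, mul_sub, sub_mul,
    Finset.mul_sum, Finset.mul_sum, Finset.sum_mul, Finset.sum_mul]

open Finset

-- number of pairs inside S
lemma edges_in_S {n k : ℕ} {S : Finset (Fin n)}
    (hS : S ∈ powersetCard k (univ : Finset (Fin n))) :
    ((powersetCard 2 (univ : Finset (Fin n))).filter (fun e => e ⊆ S)).card = k.choose 2 := by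
  classical
  rw [mem_powersetCard] at hS
  have : (powersetCard 2 (univ : Finset (Fin n))).filter (fun e => e ⊆ S)
      = powersetCard 2 S := by
    ext e
    simp only [Finset.mem_filter, mem_powersetCard, Finset.subset_univ, true_and]
    tauto
  rw [this, card_powersetCard, hS.2]

-- number of k-sets containing a fixed pair
lemma supersets_count {n k : ℕ} (hk : 2 ≤ k) (hkn : k ≤ n) {e : Finset (Fin n)}
    (he : e ∈ powersetCard 2 (univ : Finset (Fin n))) :
    ((powersetCard k (univ : Finset (Fin n))).filter (fun S => e ⊆ S)).card
      = (n - 2).choose (k - 2) := by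
  classical
  rw [mem_powersetCard] at he
  have key : ((powersetCard k (univ : Finset (Fin n))).filter (fun S => e ⊆ S)).card
      = (powersetCard (k - 2) ((univ : Finset (Fin n)) \ e)).card := by
    apply Finset.card_bij (fun S _ => S \ e)
    · intro S hS
      rw [Finset.mem_filter, mem_powersetCard] at hS
      obtain ⟨⟨_, hcard⟩, hsub⟩ := hS
      rw [mem_powersetCard]
      refine ⟨Finset.sdiff_subset_sdiff (Finset.subset_univ S) le_rfl, ?_⟩
      rw [Finset.card_sdiff_of_subset hsub, hcard, he.2]
    · intro S1 h1 S2 h2 heq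
      rw [Finset.mem_filter] at h1 h2
      have e1 := Finset.sdiff_union_of_subset h1.2
      have e2 := Finset.sdiff_union_of_subset h2.2
      rw [← e1, ← e2, heq]
    · intro t ht
      rw [mem_powersetCard] at ht
      have hdisj : Disjoint t e := Finset.disjoint_of_subset_left ht.1 (Finset.sdiff_disjoint)
      refine ⟨t ∪ e, ?_, ?_⟩
      · rw [Finset.mem_filter, mem_powersetCard]
        refine ⟨⟨Finset.subset_univ _, ?_⟩, Finset.subset_union_right⟩
        rw [Finset.card_union_of_disjoint hdisj, ht.2, he.2]
        omega
      · rw [Finset.union_sdiff_cancel_right hdisj]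
  rw [key, card_powersetCard]
  congr 1
  rw [Finset.card_sdiff_of_subset (Finset.subset_univ e), he.2, Finset.card_univ, Fintype.card_fin]

-- divisibility
lemma choose_div {n k : ℕ} (hk : 3 ≤ k) (hkn : k ≤ n)
    (hdiv : (Nat.factorial k * Nat.factorial (n - k)) ∣ Nat.factorial (n - 2)) :
    ∃ m : ℕ, (n - 2).choose (k - 2) = k * (k - 1) * m := by
  have h1 : k - 2 ≤ n - 2 := by omega
  have h2 := Nat.choose_mul_factorial_mul_factorial h1
  have h3 : n - 2 - (k - 2) = n - k := by omega
  rw [h3] at h2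
  have hfk : Nat.factorial k = k * (k - 1) * Nat.factorial (k - 2) := by
    obtain ⟨j, rfl⟩ : ∃ j, k = j + 2 := ⟨k - 2, by omega⟩
    show (j + 2).factorial = (j + 2) * (j + 2 - 1) * (j + 2 - 2).factorial
    simp [Nat.factorial_succ]
    ring
  rw [← h2, hfk] at hdiv
  have hpos : 0 < Nat.factorial (k - 2) * Nat.factorial (n - k) :=
    Nat.mul_pos (Nat.factorial_pos _) (Nat.factorial_pos _)
  have : k * (k - 1) * (Nat.factorial (k - 2) * Nat.factorial (n - k)) ∣
      (n - 2).choose (k - 2) * (Nat.factorial (k - 2) * Nat.factorial (n - k)) := by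
    calc k * (k - 1) * (Nat.factorial (k - 2) * Nat.factorial (n - k))
        = k * (k - 1) * Nat.factorial (k - 2) * Nat.factorial (n - k) := by ring
      _ ∣ (n - 2).choose (k - 2) * Nat.factorial (k - 2) * Nat.factorial (n - k) := hdiv
      _ = (n - 2).choose (k - 2) * (Nat.factorial (k - 2) * Nat.factorial (n - k)) := by ring
  exact (Nat.mul_dvd_mul_iff_right hpos).1 this

open Finset

lemma mono_iff {n k : ℕ} (hk : 2 ≤ k) :
    (∀ T ∈ (powersetCard 2 (univ : Finset (Fin n))).powerset,
       ∃ S ∈ powersetCard k (univ : Finset (Fin n)),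
         (T.filter (fun e => e ⊆ S)).card = 0 ∨
         (T.filter (fun e => e ⊆ S)).card = k.choose 2) ↔
    ∀ G : SimpleGraph (Fin n),
      (∃ s : Finset (Fin n), G.IsNClique k s) ∨ (∃ s : Finset (Fin n), Gᶜ.IsNClique k s) := by
  classical
  have edges_in_S : ∀ S ∈ powersetCard k (univ : Finset (Fin n)),
      ((powersetCard 2 (univ : Finset (Fin n))).filter (fun e => e ⊆ S)).card = k.choose 2 := by
    intro S hS
    rw [mem_powersetCard] at hS
    have : (powersetCard 2 (univ : Finset (Fin n))).filter (fun e => e ⊆ S)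
        = powersetCard 2 S := by
      ext e
      simp only [Finset.mem_filter, mem_powersetCard, Finset.subset_univ, true_and]
      tauto
    rw [this, card_powersetCard, hS.2]
  constructor
  · intro H G
    set T : Finset (Finset (Fin n)) :=
      (powersetCard 2 (univ : Finset (Fin n))).filter
        (fun e => ∃ x ∈ e, ∃ y ∈ e, G.Adj x y) with hT
    obtain ⟨S, hS, hcase⟩ := H T (Finset.mem_powerset.2 (Finset.filter_subset _ _))
    have hScard : S.card = k := (mem_powersetCard.1 hS).2
    have hpairT : ∀ x y : Fin n, x ∈ S → y ∈ S → x ≠ y →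
        ({x, y} : Finset (Fin n)) ∈ powersetCard 2 (univ : Finset (Fin n)) ∧
        ({x, y} : Finset (Fin n)) ⊆ S := by
      intro x y hx hy hxy
      refine ⟨mem_powersetCard.2 ⟨Finset.subset_univ _, Finset.card_pair hxy⟩, ?_⟩
      intro z hz
      rcases Finset.mem_insert.1 hz with rfl | hz
      · exact hx
      · rw [Finset.mem_singleton.1 hz]; exact hy
    rcases hcase with h0 | hC
    · -- no edges: S is a Gᶜ-clique
      right
      refine ⟨S, ⟨?_, hScard⟩⟩
      intro x hx y hy hxy
      refine ⟨hxy, fun hadj => ?_⟩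
      have hmem : ({x, y} : Finset (Fin n)) ∈ T.filter (fun e => e ⊆ S) := by
        obtain ⟨hE, hsub⟩ := hpairT x y hx hy hxy
        refine Finset.mem_filter.2 ⟨Finset.mem_filter.2 ⟨hE, ?_⟩, hsub⟩
        exact ⟨x, by simp, y, by simp, hadj⟩
      rw [Finset.card_eq_zero] at h0
      rw [h0] at hmem
      exact absurd hmem (Finset.notMem_empty _)
    · -- all edges: S is a G-clique
      left
      refine ⟨S, ⟨?_, hScard⟩⟩
      intro x hx y hy hxy
      have hsubfil : (powersetCard 2 (univ : Finset (Fin n))).filter (fun e => e ⊆ S)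
          ⊆ T.filter (fun e => e ⊆ S) := by
        have heq : T.filter (fun e => e ⊆ S)
            = (powersetCard 2 (univ : Finset (Fin n))).filter (fun e => e ⊆ S) :=
          Finset.eq_of_subset_of_card_le
            (Finset.filter_subset_filter _ (Finset.filter_subset _ _))
            (by rw [edges_in_S S hS, hC])
        exact le_of_eq heq.symm
      obtain ⟨hE, hsub⟩ := hpairT x y hx hy hxy
      have : ({x, y} : Finset (Fin n)) ∈ T.filter (fun e => e ⊆ S) :=
        hsubfil (Finset.mem_filter.2 ⟨hE, hsub⟩)
      have hadj : ∃ u ∈ ({x, y} : Finset (Fin n)), ∃ v ∈ ({x, y} : Finset (Fin n)), G.Adj u v :=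
        (Finset.mem_filter.1 (Finset.mem_filter.1 this).1).2
      obtain ⟨u, hu, v, hv, huv⟩ := hadj
      simp only [Finset.mem_insert, Finset.mem_singleton] at hu hv
      rcases hu with rfl | rfl <;> rcases hv with rfl | rfl
      · exact absurd huv (G.irrefl)
      · exact huv
      · exact huv.symm
      · exact absurd huv (G.irrefl)
  · intro H T hT
    rw [Finset.mem_powerset] at hT
    set G : SimpleGraph (Fin n) :=
      { Adj := fun x y => x ≠ y ∧ ({x, y} : Finset (Fin n)) ∈ T
        symm := ⟨by
          intro x y ⟨hxy, hmem⟩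
          exact ⟨hxy.symm, by rwa [Finset.pair_comm]⟩⟩
        loopless := ⟨fun x h => h.1 rfl⟩ } with hG
    rcases H G with ⟨s, hs⟩ | ⟨s, hs⟩
    · refine ⟨s, mem_powersetCard.2 ⟨Finset.subset_univ _, hs.2⟩, Or.inr ?_⟩
      have hfull : (powersetCard 2 (univ : Finset (Fin n))).filter (fun e => e ⊆ s)
          ⊆ T.filter (fun e => e ⊆ s) := by
        intro e he
        rw [Finset.mem_filter] at he
        obtain ⟨heE, hesub⟩ := he
        obtain ⟨x, y, hxy, rfl⟩ := Finset.card_eq_two.1 (mem_powersetCard.1 heE).2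
        have hx : x ∈ s := hesub (by simp)
        have hy : y ∈ s := hesub (by simp)
        have := hs.1 hx hy hxy
        exact Finset.mem_filter.2 ⟨this.2, hesub⟩
      have h1 : (T.filter (fun e => e ⊆ s)).card ≤ k.choose 2 := by
        rw [← edges_in_S s (mem_powersetCard.2 ⟨Finset.subset_univ _, hs.2⟩)]
        exact Finset.card_le_card (Finset.filter_subset_filter _ hT)
      have h2 : k.choose 2 ≤ (T.filter (fun e => e ⊆ s)).card := by
        rw [← edges_in_S s (mem_powersetCard.2 ⟨Finset.subset_univ _, hs.2⟩)]
        exact Finset.card_le_card hfull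
      omega
    · refine ⟨s, mem_powersetCard.2 ⟨Finset.subset_univ _, hs.2⟩, Or.inl ?_⟩
      rw [Finset.card_eq_zero, Finset.filter_eq_empty_iff]
      intro e heT hesub
      have heE : e ∈ powersetCard 2 (univ : Finset (Fin n)) := hT heT
      obtain ⟨x, y, hxy, rfl⟩ := Finset.card_eq_two.1 (mem_powersetCard.1 heE).2
      have hx : x ∈ s := hesub (by simp)
      have hy : y ∈ s := hesub (by simp)
      have := hs.1 hx hy hxy
      exact this.2 ⟨hxy, heT⟩
open Finset Complex in
lemma key_identity (n k mm : ℕ) (hk : 3 ≤ k) (hkn : k ≤ n)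
    (hm : (n - 2).choose (k - 2) = k * (k - 1) * mm) :
    (∑ U ∈ (powersetCard k (univ : Finset (Fin n))).powerset,
        ∏ e ∈ powersetCard 2 (univ : Finset (Fin n)),
          Real.cos (2 * Real.pi / ((k : ℝ) * ((k : ℝ) - 1)) *
            ((U.filter fun S => e ⊆ S).card : ℝ)))
    = (-1 : ℝ) ^ (mm * (powersetCard 2 (univ : Finset (Fin n))).card) *
      2 ^ (powersetCard k (univ : Finset (Fin n))).card *
      (1 / 2) ^ (powersetCard 2 (univ : Finset (Fin n))).card *
      ∑ T ∈ (powersetCard 2 (univ : Finset (Fin n))).powerset,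
        ∏ S ∈ powersetCard k (univ : Finset (Fin n)),
          Real.cos (Real.pi / ((k : ℝ) * ((k : ℝ) - 1)) *
            (2 * ((T.filter fun e => e ⊆ S).card : ℝ) - (k.choose 2 : ℝ))) := by
  classical
  set E := powersetCard 2 (univ : Finset (Fin n)) with hE
  set K := powersetCard k (univ : Finset (Fin n)) with hK
  set c : ℝ := 2 * Real.pi / ((k : ℝ) * ((k : ℝ) - 1)) with hc
  have hkR : (0 : ℝ) < (k : ℝ) * ((k : ℝ) - 1) := by
    have : (3 : ℝ) ≤ (k : ℝ) := by exact_mod_cast hk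
    nlinarith
  -- counting facts
  have hCS : ∀ S ∈ K, (E.filter (fun e => e ⊆ S)).card = k.choose 2 :=
    fun S hS => edges_in_S hS
  have hD : ∀ e ∈ E, (K.filter (fun S => e ⊆ S)).card = (n - 2).choose (k - 2) :=
    fun e he => supersets_count (by omega) hkn he
  have hED : E.card * ((n - 2).choose (k - 2)) = K.card * k.choose 2 := by
    have h := swap_count E K
    rw [Finset.sum_congr rfl hD, Finset.sum_congr rfl hCS, Finset.sum_const,
      Finset.sum_const, smul_eq_mul, smul_eq_mul] at h
    exact h
  -- the weight functions
  set tc : Finset (Finset (Fin n)) → Finset (Fin n) → ℕ :=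
    fun T S => (T.filter (fun e => e ⊆ S)).card with htc
  set w : Finset (Finset (Fin n)) → Finset (Fin n) → ℝ :=
    fun T S => ((tc T S : ℝ) - (tc (E \ T) S : ℝ)) with hw
  set ψ : Finset (Finset (Fin n)) → Finset (Fin n) → ℝ := fun T S =>
    Real.pi / ((k : ℝ) * ((k : ℝ) - 1)) * (2 * (tc T S : ℝ) - (k.choose 2 : ℝ)) with hψ
  -- for S ∈ K and T ⊆ E, c * w T S = 2 * ψ T S
  have hcw : ∀ T ⊆ E, ∀ S ∈ K, c * w T S = 2 * ψ T S := by
    intro T hT S hS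
    have hpart : tc T S + tc (E \ T) S = k.choose 2 := by
      rw [← hCS S hS, htc]
      dsimp only
      rw [← Finset.card_union_of_disjoint (Finset.disjoint_filter_filter
        (Finset.disjoint_sdiff)), ← Finset.filter_union, Finset.union_sdiff_of_subset hT]
    have h2 : (tc (E \ T) S : ℝ) = (k.choose 2 : ℝ) - (tc T S : ℝ) := by
      have := congrArg (fun x : ℕ => (x : ℝ)) hpart
      push_cast at this ⊢
      linarith
    rw [hw, hψ, hc]
    dsimp only
    rw [h2]
    field_simp
    ring
  -- swap lemma, real version : for any U T,
  have hswapR : ∀ U T : Finset (Finset (Fin n)),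
      ∑ e ∈ T, ((U.filter fun S => e ⊆ S).card : ℝ) = ∑ S ∈ U, (tc T S : ℝ) := by
    intro U T
    have := swap_count T U
    exact_mod_cast congrArg (fun x : ℕ => (x : ℝ)) this
  -- main complex computation
  rw [← Complex.ofReal_inj]
  rw [Complex.ofReal_sum]
  calc
    ∑ U ∈ K.powerset, ((∏ e ∈ E, Real.cos (c * ((U.filter fun S => e ⊆ S).card : ℝ)) : ℝ) : ℂ)
      = ∑ U ∈ K.powerset, ∏ e ∈ E,
          ((Real.cos (c * ((U.filter fun S => e ⊆ S).card : ℝ)) : ℝ) : ℂ) := by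
        refine Finset.sum_congr rfl fun U _ => ?_
        rw [Complex.ofReal_prod]
    _ = ∑ U ∈ K.powerset, ((1 / 2 : ℂ) ^ E.card * ∑ T ∈ E.powerset,
          Complex.exp ((↑(c * ((∑ e ∈ T, ((U.filter fun S => e ⊆ S).card : ℝ)) -
            ∑ e ∈ E \ T, ((U.filter fun S => e ⊆ S).card : ℝ))) : ℂ) * I)) := by
        refine Finset.sum_congr rfl fun U _ => ?_
        exact cos_prod_expand E c _
    _ = (1 / 2 : ℂ) ^ E.card * ∑ U ∈ K.powerset, ∑ T ∈ E.powerset,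
          Complex.exp ((↑(c * ((∑ e ∈ T, ((U.filter fun S => e ⊆ S).card : ℝ)) -
            ∑ e ∈ E \ T, ((U.filter fun S => e ⊆ S).card : ℝ))) : ℂ) * I) := by
        rw [Finset.mul_sum]
    _ = (1 / 2 : ℂ) ^ E.card * ∑ T ∈ E.powerset, ∑ U ∈ K.powerset,
          Complex.exp ((↑(c * ∑ S ∈ U, w T S) : ℂ) * I) := by
        rw [Finset.sum_comm]
        congr 1
        refine Finset.sum_congr rfl fun T _ => ?_
        refine Finset.sum_congr rfl fun U _ => ?_
        congr 3
        rw [hswapR U T, hswapR U (E \ T), hw]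
        dsimp only
        rw [Finset.sum_sub_distrib]
    _ = (1 / 2 : ℂ) ^ E.card * ∑ T ∈ E.powerset,
          ∏ S ∈ K, (Complex.exp ((↑(c * w T S) : ℂ) * I) + 1) := by
        congr 1
        refine Finset.sum_congr rfl fun T _ => ?_
        rw [Finset.prod_add]
        refine (Finset.sum_congr rfl fun U hU => ?_).symm
        rw [Finset.prod_const_one, mul_one, ← Complex.exp_sum]
        congr 1
        rw [Complex.ofReal_mul, Complex.ofReal_sum, Finset.mul_sum, Finset.sum_mul]
        exact Finset.sum_congr rfl fun S _ => by push_cast; ring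
    _ = (1 / 2 : ℂ) ^ E.card * ∑ T ∈ E.powerset,
          ((-1 : ℂ) ^ (mm * E.card) * (2 : ℂ) ^ K.card *
            ((∏ S ∈ K, Real.cos (ψ T S) : ℝ) : ℂ)) := by
        congr 1
        refine Finset.sum_congr rfl fun T hT => ?_
        rw [Finset.mem_powerset] at hT
        -- rewrite each factor
        have hfac : ∀ S ∈ K, Complex.exp ((↑(c * w T S) : ℂ) * I) + 1 =
            Complex.exp ((↑(ψ T S) : ℂ) * I) * (2 * ((Real.cos (ψ T S) : ℝ) : ℂ)) := by
          intro S hS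
          rw [add_comm]
          have h2ψ : c * w T S = 2 * ψ T S := hcw T hT S hS
          rw [h2ψ]
          have := one_add_exp (2 * ψ T S)
          rw [this]
          norm_num
        rw [Finset.prod_congr rfl hfac, Finset.prod_mul_distrib, ← Complex.exp_sum,
          Finset.prod_mul_distrib, Finset.prod_const, ← Complex.ofReal_prod]
        have hsum : ∑ S ∈ K, (↑(ψ T S) : ℂ) * I =
            ((((mm * T.card : ℕ) : ℤ) : ℂ)) * (2 * ↑Real.pi * I) -
              ((mm * E.card : ℕ) : ℂ) * (↑Real.pi * I) := by
          have hsψ : ∑ S ∈ K, ψ T S =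
              Real.pi * mm * (2 * (T.card : ℝ) - (E.card : ℝ)) := by
            rw [hψ]
            dsimp only
            rw [← Finset.mul_sum, Finset.sum_sub_distrib, ← Finset.mul_sum]
            have h1 : ∑ S ∈ K, (tc T S : ℝ) = (T.card : ℝ) * ((n - 2).choose (k - 2) : ℝ) := by
              rw [← hswapR K T]
              have : ∀ e ∈ T, ((K.filter fun S => e ⊆ S).card : ℝ) =
                  ((n - 2).choose (k - 2) : ℝ) := by
                intro e he
                exact_mod_cast congrArg (fun x : ℕ => (x : ℝ)) (hD e (hT he))
              rw [Finset.sum_congr rfl this, Finset.sum_const, nsmul_eq_mul]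
            have h2 : ∑ S ∈ K, ((k.choose 2 : ℕ) : ℝ) = (K.card : ℝ) * (k.choose 2 : ℝ) := by
              rw [Finset.sum_const, nsmul_eq_mul]
            rw [h1, h2]
            have hKC : (K.card : ℝ) * (k.choose 2 : ℝ) =
                (E.card : ℝ) * ((n - 2).choose (k - 2) : ℝ) := by
              exact_mod_cast congrArg (fun x : ℕ => (x : ℝ)) hED.symm
            rw [hKC]
            have hmr : ((n - 2).choose (k - 2) : ℝ) = (k : ℝ) * ((k : ℝ) - 1) * (mm : ℝ) := by
              have := congrArg (fun x : ℕ => (x : ℝ)) hm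
              push_cast at this
              rw [this]
              have h1k : (1 : ℝ) ≤ (k : ℝ) := by exact_mod_cast (by omega : 1 ≤ k)
              rw [Nat.cast_sub (by omega : 1 ≤ k)]
              push_cast
              ring
            rw [hmr]
            rw [div_mul_eq_mul_div, div_eq_iff (ne_of_gt hkR)]
            ring
          have hstep : (∑ S ∈ K, (↑(ψ T S) : ℂ) * I) = (↑(∑ S ∈ K, ψ T S) : ℂ) * I := by
            rw [Complex.ofReal_sum, Finset.sum_mul]
          rw [hstep, hsψ]
          push_cast
          ring
        rw [hsum, Complex.exp_sub]
        have he1 : Complex.exp (((((mm * T.card : ℕ) : ℤ) : ℂ)) * (2 * ↑Real.pi * I)) = 1 :=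
          Complex.exp_int_mul_two_pi_mul_I _
        have he2 : Complex.exp (((mm * E.card : ℕ) : ℂ) * (↑Real.pi * I)) =
            (-1 : ℂ) ^ (mm * E.card) := by
          rw [Complex.exp_nat_mul, Complex.exp_pi_mul_I]
        rw [he1, he2]
        have : ((-1 : ℂ) ^ (mm * E.card))⁻¹ = (-1 : ℂ) ^ (mm * E.card) := by
          rw [← inv_pow, inv_neg_one]
        rw [one_div, this]
        ring
    _ = ((-1 : ℝ) ^ (mm * E.card) * 2 ^ K.card * (1 / 2) ^ E.card *
          ∑ T ∈ E.powerset, ∏ S ∈ K, Real.cos (ψ T S) : ℝ) := by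
        push_cast
        rw [Finset.mul_sum, Finset.mul_sum]
        exact Finset.sum_congr rfl fun T _ => by ring
open Finset in
lemma P_zero_iff (n k : ℕ) (hk : 3 ≤ k) :
    ((∑ T ∈ (powersetCard 2 (univ : Finset (Fin n))).powerset,
        ∏ S ∈ powersetCard k (univ : Finset (Fin n)),
          Real.cos (Real.pi / ((k : ℝ) * ((k : ℝ) - 1)) *
            (2 * ((T.filter fun e => e ⊆ S).card : ℝ) - (k.choose 2 : ℝ)))) = 0)
    ↔ ∀ T ∈ (powersetCard 2 (univ : Finset (Fin n))).powerset,
        ∃ S ∈ powersetCard k (univ : Finset (Fin n)),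
          (T.filter (fun e => e ⊆ S)).card = 0 ∨
          (T.filter (fun e => e ⊆ S)).card = k.choose 2 := by
  classical
  set E := powersetCard 2 (univ : Finset (Fin n)) with hE
  set K := powersetCard k (univ : Finset (Fin n)) with hK
  have hCpos : 0 < k.choose 2 := Nat.choose_pos (by omega)
  have hCr : (0 : ℝ) < (k.choose 2 : ℝ) := by exact_mod_cast hCpos
  have hkk : ((k : ℝ) * ((k : ℝ) - 1)) = 2 * (k.choose 2 : ℝ) := by
    obtain ⟨j, rfl⟩ : ∃ j, k = j + 1 := ⟨k - 1, by omega⟩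
    have h2 : 2 ∣ (j + 1) * j := by
      have := Nat.even_mul_succ_self j
      rw [mul_comm] at this
      exact this.two_dvd
    have h3 : 2 * ((j + 1).choose 2) = (j + 1) * j := by
      rw [Nat.choose_two_right, Nat.add_sub_cancel, Nat.mul_div_cancel' h2]
    have := congrArg (fun x : ℕ => (x : ℝ)) h3
    push_cast at this ⊢
    linarith
  have hpi := Real.pi_pos
  have hkkpos : (0 : ℝ) < (k : ℝ) * ((k : ℝ) - 1) := by rw [hkk]; positivity
  have hbound : ∀ T ∈ E.powerset, ∀ S ∈ K, (T.filter (fun e => e ⊆ S)).card ≤ k.choose 2 := by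
    intro T hT S hS
    rw [Finset.mem_powerset] at hT
    rw [← edges_in_S hS]
    exact Finset.card_le_card (Finset.filter_subset_filter _ hT)
  have hangle : ∀ a : ℕ, a ≤ k.choose 2 →
      Real.pi / ((k : ℝ) * ((k : ℝ) - 1)) * (2 * (a : ℝ) - (k.choose 2 : ℝ)) ∈
        Set.Icc (-(Real.pi / 2)) (Real.pi / 2) := by
    intro a ha
    have har : (a : ℝ) ≤ (k.choose 2 : ℝ) := by exact_mod_cast ha
    have ha0 : (0 : ℝ) ≤ (a : ℝ) := Nat.cast_nonneg a
    rw [hkk]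
    constructor
    · rw [neg_le, div_mul_eq_mul_div, ← neg_div, div_le_div_iff₀ (by positivity) (by norm_num : (0:ℝ) < 2)]
      nlinarith
    · rw [div_mul_eq_mul_div, div_le_div_iff₀ (by positivity) (by norm_num : (0:ℝ) < 2)]
      nlinarith
  have hnn : ∀ T ∈ E.powerset, (0:ℝ) ≤ ∏ S ∈ K,
      Real.cos (Real.pi / ((k : ℝ) * ((k : ℝ) - 1)) *
        (2 * ((T.filter fun e => e ⊆ S).card : ℝ) - (k.choose 2 : ℝ))) := by
    intro T hT
    exact Finset.prod_nonneg fun S hS =>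
      Real.cos_nonneg_of_mem_Icc (hangle _ (hbound T hT S hS))
  rw [Finset.sum_eq_zero_iff_of_nonneg hnn]
  refine forall₂_congr fun T hT => ?_
  rw [Finset.prod_eq_zero_iff]
  constructor
  · rintro ⟨S, hS, hcos⟩
    refine ⟨S, hS, ?_⟩
    by_contra hcon
    push_neg at hcon
    obtain ⟨h0, hC⟩ := hcon
    have h1 : 0 < (T.filter (fun e => e ⊆ S)).card := Nat.pos_of_ne_zero h0
    have h2 : (T.filter (fun e => e ⊆ S)).card < k.choose 2 :=
      lt_of_le_of_ne (hbound T hT S hS) hC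
    have h1r : (0:ℝ) < ((T.filter (fun e => e ⊆ S)).card : ℝ) := by exact_mod_cast h1
    have h2r : (((T.filter (fun e => e ⊆ S)).card : ℝ)) < (k.choose 2 : ℝ) := by
      exact_mod_cast h2
    have hpos : (0:ℝ) < Real.cos (Real.pi / ((k : ℝ) * ((k : ℝ) - 1)) *
        (2 * ((T.filter fun e => e ⊆ S).card : ℝ) - (k.choose 2 : ℝ))) := by
      apply Real.cos_pos_of_mem_Ioo
      constructor
      · rw [hkk, neg_lt, div_mul_eq_mul_div, ← neg_div,
          div_lt_div_iff₀ (by positivity) (by norm_num : (0:ℝ) < 2)]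
        nlinarith
      · rw [hkk, div_mul_eq_mul_div, div_lt_div_iff₀ (by positivity) (by norm_num : (0:ℝ) < 2)]
        nlinarith
    rw [hcos] at hpos
    exact lt_irrefl 0 hpos
  · rintro ⟨S, hS, h0 | hC⟩
    · refine ⟨S, hS, ?_⟩
      rw [h0]
      have harg : Real.pi / ((k : ℝ) * ((k : ℝ) - 1)) *
          (2 * ((0 : ℕ) : ℝ) - (k.choose 2 : ℝ)) = -(Real.pi / 2) := by
        rw [hkk, div_mul_eq_mul_div, div_eq_iff (by positivity : (2 * (k.choose 2 : ℝ)) ≠ 0)]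
        push_cast
        ring
      rw [harg, Real.cos_neg, Real.cos_pi_div_two]
    · refine ⟨S, hS, ?_⟩
      rw [hC]
      have harg : Real.pi / ((k : ℝ) * ((k : ℝ) - 1)) *
          (2 * ((k.choose 2 : ℕ) : ℝ) - (k.choose 2 : ℝ)) = Real.pi / 2 := by
        rw [hkk, div_mul_eq_mul_div, div_eq_div_iff (by positivity) (by norm_num : (2:ℝ) ≠ 0)]
        ring
      rw [harg, Real.cos_pi_div_two]
open Finset

/-- The k-th diagonal Ramsey number: the least positive integer `n` such that every
simple graph on `n` vertices contains a clique of size `k` or an independent set of size `k`. -/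
noncomputable def diagonalRamsey (k : ℕ) : ℕ :=
  sInf {n : ℕ | 0 < n ∧ ∀ G : SimpleGraph (Fin n),
    (∃ s : Finset (Fin n), G.IsNClique k s) ∨ (∃ s : Finset (Fin n), Gᶜ.IsNClique k s)}

theorem stmt_0 (n k : ℕ) (hk : 3 ≤ k) (hkn : k ≤ n)
    (hdiv : (Nat.factorial k * Nat.factorial (n - k)) ∣ Nat.factorial (n - 2)) :
    (∑ U ∈ (Finset.powersetCard k (Finset.univ : Finset (Fin n))).powerset,
        ∏ e ∈ Finset.powersetCard 2 (Finset.univ : Finset (Fin n)),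
          Real.cos (2 * Real.pi / ((k : ℝ) * ((k : ℝ) - 1)) *
            ((U.filter fun S => e ⊆ S).card : ℝ))) = 0 ↔
      diagonalRamsey k ≤ n := by
  obtain ⟨mm, hm⟩ := choose_div hk hkn hdiv
  rw [key_identity n k mm hk hkn hm]
  have hne1 : ((-1 : ℝ) ^ (mm * (powersetCard 2 (univ : Finset (Fin n))).card)) ≠ 0 :=
    pow_ne_zero _ (by norm_num)
  have hne2 : ((2 : ℝ) ^ (powersetCard k (univ : Finset (Fin n))).card) ≠ 0 :=
    pow_ne_zero _ (by norm_num)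
  have hne3 : (((1 : ℝ) / 2) ^ (powersetCard 2 (univ : Finset (Fin n))).card) ≠ 0 :=
    pow_ne_zero _ (by norm_num)
  rw [mul_eq_zero, mul_eq_zero, mul_eq_zero]
  simp only [hne1, hne2, hne3, false_or]
  rw [P_zero_iff n k hk, mono_iff (by omega : 2 ≤ k)]
  constructor
  · intro H
    exact Nat.sInf_le ⟨by omega, H⟩
  · intro H G
    obtain ⟨N, hN0, hN⟩ := ramsey_exists (k + k) k k le_rfl
    have hmem := Nat.sInf_mem (s := {n : ℕ | 0 < n ∧ ∀ G : SimpleGraph (Fin n),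
      (∃ s : Finset (Fin n), G.IsNClique k s) ∨ (∃ s : Finset (Fin n), Gᶜ.IsNClique k s)})
      ⟨N, hN0, hN⟩
    obtain ⟨hr0, hrall⟩ := hmem
    have hle : diagonalRamsey k ≤ n := H
    let f : Fin (diagonalRamsey k) ↪ Fin n := Fin.castLEEmb hle
    rcases hrall (G.comap f) with ⟨s, hs⟩ | ⟨s, hs⟩
    · exact Or.inl ⟨s.map f, push_clique f G hs⟩
    · exact Or.inr ⟨s.map f, push_clique_compl f G hs⟩
end

section
/- Let n ≥ k ≥ 3 be positive integers such that (n-2)!/(k!(n-k)!) is an integer. Then Σ_{G,H} (-1)^{|E(H)|} cos( (4π/(k(k-1))) · i(G,H) ) = 0 if and only if n ≥ R(k), where the summation is over all simple graphs G on the vertex set [n] and all k-uniform hypergraphs H on the vertex set [n]. -/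
open Finset

def ramseyN : ℕ → ℕ → ℕ
  | 0, _ => 1
  | _+1, 0 => 1
  | s+1, t+1 => ramseyN s (t+1) + ramseyN (s+1) t

lemma ramseyN_pos : ∀ s t, 0 < ramseyN s t
  | 0, _ => by rw [ramseyN]; exact Nat.one_pos
  | _+1, 0 => by rw [ramseyN]; exact Nat.one_pos
  | s+1, t+1 => by
      rw [ramseyN]; exact Nat.add_pos_left (ramseyN_pos s (t+1)) _

lemma ramsey_aux {V : Type*} [DecidableEq V] [Fintype V] (G : SimpleGraph V)
    [DecidableRel G.Adj] :
    ∀ (s t : ℕ) (C : Finset V), ramseyN s t ≤ C.card →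
      (∃ A ⊆ C, G.IsNClique s A) ∨ (∃ A ⊆ C, Gᶜ.IsNClique t A) := by
  intro s
  induction s with
  | zero => intro t C _; exact Or.inl ⟨∅, empty_subset _, by simp⟩
  | succ s ihs =>
    intro t
    induction t with
    | zero => intro C _; exact Or.inr ⟨∅, empty_subset _, by simp⟩
    | succ t iht =>
      intro C hC
      rw [ramseyN] at hC
      have hCne : C.Nonempty := by
        rw [← Finset.card_pos]
        exact lt_of_lt_of_le (Nat.add_pos_left (ramseyN_pos s (t+1)) _) hC
      obtain ⟨v, hv⟩ := hCne
      set A := C.filter (fun u => G.Adj v u) with hA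
      set B := C.filter (fun u => u ≠ v ∧ ¬ G.Adj v u) with hB
      have hsub : C ⊆ insert v (A ∪ B) := by
        intro x hx
        by_cases hxv : x = v
        · simp [hxv]
        · by_cases hadj : G.Adj v x
          · simp [hA, mem_insert, mem_union, mem_filter, hx, hadj]
          · simp [hB, mem_insert, mem_union, mem_filter, hx, hadj, hxv]
      have hcard : C.card ≤ 1 + (A.card + B.card) := by
        calc C.card ≤ (insert v (A ∪ B)).card := card_le_card hsub
          _ ≤ 1 + (A ∪ B).card := by rw [Nat.add_comm]; exact card_insert_le _ _
          _ ≤ 1 + (A.card + B.card) := by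
              exact Nat.add_le_add_left (card_union_le _ _) 1
      have hcase : ramseyN s (t+1) ≤ A.card ∨ ramseyN (s+1) t ≤ B.card := by
        by_contra h
        push_neg at h
        omega
      rcases hcase with h | h
      · rcases ihs (t+1) A h with ⟨D, hDA, hD⟩ | ⟨D, hDA, hD⟩
        · -- clique s in A, add v
          refine Or.inl ⟨insert v D, ?_, ?_⟩
          · intro x hx
            rcases mem_insert.mp hx with rfl | hx
            · exact hv
            · exact (filter_subset _ _) (hDA hx)
          · exact hD.insert (fun b hb => (mem_filter.mp (hDA hb)).2)
        · exact Or.inr ⟨D, hDA.trans (filter_subset _ _), hD⟩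
      · rcases iht B h with ⟨D, hDB, hD⟩ | ⟨D, hDB, hD⟩
        · exact Or.inl ⟨D, hDB.trans (filter_subset _ _), hD⟩
        · refine Or.inr ⟨insert v D, ?_, ?_⟩
          · intro x hx
            rcases mem_insert.mp hx with rfl | hx
            · exact hv
            · exact (filter_subset _ _) (hDB hx)
          · refine hD.insert (fun b hb => ?_)
            have := (mem_filter.mp (hDB hb)).2
            exact ⟨this.1.symm, this.2⟩

lemma ramseySet_mem (k n : ℕ) (hn : ramseyN k k ≤ n) :
    n ∈ {n : ℕ | 0 < n ∧ ∀ G : SimpleGraph (Fin n),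
      (∃ s : Finset (Fin n), G.IsNClique k s) ∨ (∃ s : Finset (Fin n), Gᶜ.IsNClique k s)} := by
  constructor
  · exact lt_of_lt_of_le (ramseyN_pos k k) hn
  · intro G
    classical
    have := ramsey_aux G k k (univ : Finset (Fin n)) (by simpa using hn)
    rcases this with ⟨A, _, hA⟩ | ⟨A, _, hA⟩
    · exact Or.inl ⟨A, hA⟩
    · exact Or.inr ⟨A, hA⟩

lemma diagonalRamsey_le_iff (k n : ℕ) (hn : 0 < n) :
    diagonalRamsey k ≤ n ↔ ∀ G : SimpleGraph (Fin n),
      (∃ s : Finset (Fin n), G.IsNClique k s) ∨ (∃ s : Finset (Fin n), Gᶜ.IsNClique k s) := by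
  constructor
  · intro hle G
    have hne : {n : ℕ | 0 < n ∧ ∀ G : SimpleGraph (Fin n),
        (∃ s : Finset (Fin n), G.IsNClique k s) ∨
        (∃ s : Finset (Fin n), Gᶜ.IsNClique k s)}.Nonempty :=
      ⟨ramseyN k k, ramseySet_mem k _ le_rfl⟩
    have hmem : diagonalRamsey k ∈ {n : ℕ | 0 < n ∧ ∀ G : SimpleGraph (Fin n),
        (∃ s : Finset (Fin n), G.IsNClique k s) ∨
        (∃ s : Finset (Fin n), Gᶜ.IsNClique k s)} := Nat.sInf_mem hne
    set m := diagonalRamsey k with hm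
    obtain ⟨hmpos, hRam⟩ := hmem
    -- pull back G along Fin.castLE
    have hcast : m ≤ n := hle
    set f : Fin m → Fin n := Fin.castLE hcast with hf
    have hfinj : Function.Injective f := Fin.castLE_injective hcast
    set G' : SimpleGraph (Fin m) := SimpleGraph.comap f G with hG'
    rcases hRam G' with ⟨s, hs⟩ | ⟨s, hs⟩
    · refine Or.inl ⟨s.map ⟨f, hfinj⟩, ?_, ?_⟩
      · intro x hx y hy hxy
        simp only [coe_map, Set.mem_image, mem_coe] at hx hy
        obtain ⟨a, ha, rfl⟩ := hx
        obtain ⟨b, hb, rfl⟩ := hy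
        have hab : a ≠ b := fun h => hxy (by rw [h])
        exact hs.1 ha hb hab
      · rw [card_map]; exact hs.2
    · refine Or.inr ⟨s.map ⟨f, hfinj⟩, ?_, ?_⟩
      · intro x hx y hy hxy
        simp only [coe_map, Set.mem_image, mem_coe] at hx hy
        obtain ⟨a, ha, rfl⟩ := hx
        obtain ⟨b, hb, rfl⟩ := hy
        have hab : a ≠ b := fun h => hxy (by rw [h])
        have := hs.1 ha hb hab
        rw [SimpleGraph.compl_adj] at this ⊢
        exact ⟨hxy, this.2⟩
      · rw [card_map]; exact hs.2
  · intro h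
    exact Nat.sInf_le ⟨hn, h⟩

lemma graph_iff_W (n k : ℕ) :
    (∀ G : SimpleGraph (Fin n),
      (∃ s : Finset (Fin n), G.IsNClique k s) ∨ (∃ s : Finset (Fin n), Gᶜ.IsNClique k s)) ↔
    ∀ W ∈ (powersetCard 2 (univ : Finset (Fin n))).powerset,
      ∃ v ∈ powersetCard k (univ : Finset (Fin n)),
        (W.filter (· ⊆ v)).card = 0 ∨ (W.filter (· ⊆ v)).card = k.choose 2 := by
  constructor
  · intro h W hW
    rw [mem_powerset] at hW
    set G : SimpleGraph (Fin n) :=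
      { Adj := fun a b => a ≠ b ∧ ({a, b} : Finset (Fin n)) ∈ W
        symm := by
          constructor
          intro a b ⟨hab, hm⟩
          exact ⟨hab.symm, by rwa [Finset.pair_comm]⟩
        loopless := ⟨fun a ⟨hab, _⟩ => hab rfl⟩ } with hG
    rcases h G with ⟨s, hs⟩ | ⟨s, hs⟩
    · refine ⟨s, by rw [mem_powersetCard_univ]; exact hs.2, Or.inr ?_⟩
      have : W.filter (· ⊆ s) = powersetCard 2 s := by
        apply Finset.Subset.antisymm
        · intro w hw
          rw [mem_filter] at hw
          have := hW hw.1
          rw [mem_powersetCard] at this ⊢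
          exact ⟨hw.2, this.2⟩
        · intro w hw
          rw [mem_powersetCard] at hw
          obtain ⟨a, b, hab, rfl⟩ := Finset.card_eq_two.mp hw.2
          have ha : a ∈ s := hw.1 (mem_insert_self _ _)
          have hb : b ∈ s := hw.1 (mem_insert_of_mem (mem_singleton_self _))
          have hadj := hs.1 ha hb hab
          rw [mem_filter]
          exact ⟨hadj.2, hw.1⟩
      rw [this, card_powersetCard, hs.2]
    · refine ⟨s, by rw [mem_powersetCard_univ]; exact hs.2, Or.inl ?_⟩
      rw [card_eq_zero, Finset.eq_empty_iff_forall_notMem]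
      intro w hw
      rw [mem_filter] at hw
      have h2 := hW hw.1
      rw [mem_powersetCard] at h2
      obtain ⟨a, b, hab, habw⟩ := Finset.card_eq_two.mp h2.2
      subst habw
      have ha : a ∈ s := hw.2 (mem_insert_self _ _)
      have hb : b ∈ s := hw.2 (mem_insert_of_mem (mem_singleton_self _))
      have := hs.1 ha hb hab
      rw [SimpleGraph.compl_adj] at this
      exact this.2 ⟨hab, hw.1⟩
  · intro h G
    classical
    set W : Finset (Finset (Fin n)) :=
      (powersetCard 2 (univ : Finset (Fin n))).filter
        (fun w => ∀ a ∈ w, ∀ b ∈ w, a ≠ b → G.Adj a b) with hWdef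
    obtain ⟨v, hv, hcase⟩ := h W (mem_powerset.mpr (filter_subset _ _))
    rw [mem_powersetCard_univ] at hv
    rcases hcase with h0 | hfull
    · -- independent set
      refine Or.inr ⟨v, ?_, hv⟩
      intro a ha b hb hab
      rw [SimpleGraph.compl_adj]
      refine ⟨hab, fun hadj => ?_⟩
      have hmem : ({a, b} : Finset (Fin n)) ∈ W.filter (· ⊆ v) := by
        rw [mem_filter, hWdef, mem_filter, mem_powersetCard]
        refine ⟨⟨⟨subset_univ _, card_pair hab⟩, ?_⟩, ?_⟩
        · intro x hx y hy hxy
          rcases mem_insert.mp hx with rfl | hx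
          · rcases mem_insert.mp hy with rfl | hy
            · exact absurd rfl hxy
            · rw [mem_singleton] at hy; subst hy; exact hadj
          · rw [mem_singleton] at hx; subst hx
            rcases mem_insert.mp hy with rfl | hy
            · exact hadj.symm
            · rw [mem_singleton] at hy; subst hy; exact absurd rfl hxy
        · exact insert_subset ha (singleton_subset_iff.mpr hb)
      rw [card_eq_zero] at h0
      rw [h0] at hmem
      exact absurd hmem (notMem_empty _)
    · -- clique
      refine Or.inl ⟨v, ?_, hv⟩
      have hsub : W.filter (· ⊆ v) ⊆ powersetCard 2 v := by
        intro w hw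
        rw [mem_filter] at hw
        have := (filter_subset _ _) hw.1
        rw [mem_powersetCard] at this ⊢
        exact ⟨hw.2, this.2⟩
      have heq : W.filter (· ⊆ v) = powersetCard 2 v := by
        apply Finset.eq_of_subset_of_card_le hsub
        rw [card_powersetCard, hv, hfull]
      intro a ha b hb hab
      have hmem : ({a, b} : Finset (Fin n)) ∈ powersetCard 2 v := by
        rw [mem_powersetCard]
        exact ⟨insert_subset ha (singleton_subset_iff.mpr hb), card_pair hab⟩
      rw [← heq, mem_filter, hWdef, mem_filter] at hmem
      exact hmem.1.2 a (mem_insert_self _ _) b (mem_insert_of_mem (mem_singleton_self _)) hab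

lemma incidence_sum {n : ℕ} (W U : Finset (Finset (Fin n))) :
    ((W ×ˢ U).filter fun p => p.1 ⊆ p.2).card = ∑ v ∈ U, (W.filter (· ⊆ v)).card := by
  rw [Finset.card_filter, Finset.sum_product]
  rw [Finset.sum_comm]
  exact Finset.sum_congr rfl (fun v _ => (Finset.card_filter _ _).symm)

lemma count_supersets {n : ℕ} (k : ℕ) (w : Finset (Fin n)) (hw : w.card = 2) (h2k : 2 ≤ k) :
    ((powersetCard k (univ : Finset (Fin n))).filter (fun v => w ⊆ v)).card
      = (n-2).choose (k-2) := by
  have hkey : ((powersetCard k (univ : Finset (Fin n))).filter (fun v => w ⊆ v)).card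
      = (powersetCard (k-2) ((univ : Finset (Fin n)) \ w)).card := by
    apply Finset.card_bij' (fun v _ => v \ w) (fun u _ => u ∪ w)
    · intro v hv
      rw [mem_filter, mem_powersetCard] at hv
      rw [mem_powersetCard]
      refine ⟨sdiff_subset_sdiff hv.1.1 le_rfl, ?_⟩
      rw [card_sdiff_of_subset hv.2, hv.1.2, hw]
    · intro u hu
      rw [mem_powersetCard] at hu
      have hdisj : Disjoint u w := by
        refine Finset.disjoint_left.mpr (fun x hx => ?_)
        have := hu.1 hx
        rw [mem_sdiff] at this
        exact this.2
      rw [mem_filter, mem_powersetCard]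
      refine ⟨⟨subset_univ _, ?_⟩, subset_union_right⟩
      rw [card_union_of_disjoint hdisj, hu.2, hw]
      omega
    · intro v hv
      rw [mem_filter] at hv
      exact sdiff_union_of_subset hv.2
    · intro u hu
      rw [mem_powersetCard] at hu
      have hdisj : Disjoint u w := by
        refine Finset.disjoint_left.mpr (fun x hx => ?_)
        have := hu.1 hx
        rw [mem_sdiff] at this
        exact this.2
      rw [union_sdiff_right, hdisj.sdiff_eq_left]
  rw [hkey, card_powersetCard, card_sdiff_of_subset (subset_univ _), hw, card_univ, Fintype.card_fin]

lemma sum_e {n k : ℕ} (h2k : 2 ≤ k) (W : Finset (Finset (Fin n)))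
    (hW : W ⊆ powersetCard 2 (univ : Finset (Fin n))) :
    ∑ v ∈ powersetCard k (univ : Finset (Fin n)), (W.filter (· ⊆ v)).card
      = W.card * (n-2).choose (k-2) := by
  have : ∑ v ∈ powersetCard k (univ : Finset (Fin n)), (W.filter (· ⊆ v)).card
      = ∑ w ∈ W, ((powersetCard k (univ : Finset (Fin n))).filter (fun v => w ⊆ v)).card := by
    simp only [Finset.card_filter]
    rw [Finset.sum_comm]
  rw [this]
  rw [Finset.sum_congr rfl (fun w hw => count_supersets k w
    (mem_powersetCard.mp (hW hw)).2 h2k)]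
  rw [Finset.sum_const, smul_eq_mul]

lemma key_identity_s1 (n k : ℕ) (hk : 3 ≤ k) (hkn : k ≤ n) :
    k*(k-1) * n.choose k = n*(n-1) * ((n-2).choose (k-2)) := by
  obtain ⟨a, rfl⟩ : ∃ a, k = a + 2 := ⟨k-2, by omega⟩
  obtain ⟨m, rfl⟩ : ∃ m, n = m + 2 := ⟨n-2, by omega⟩
  have ham : a ≤ m := by omega
  have h1 := Nat.choose_mul_factorial_mul_factorial (show a+2 ≤ m+2 by omega)
  have h2 := Nat.choose_mul_factorial_mul_factorial ham
  have hfac : (a+2).factorial = (a+2)*(a+1)*a.factorial := by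
    rw [Nat.factorial_succ, Nat.factorial_succ]; ring
  have hfac2 : (m+2).factorial = (m+2)*(m+1)*m.factorial := by
    rw [Nat.factorial_succ, Nat.factorial_succ]; ring
  have hsub : m + 2 - (a+2) = m - a := by omega
  have hpos : 0 < a.factorial * (m-a).factorial :=
    Nat.mul_pos (Nat.factorial_pos _) (Nat.factorial_pos _)
  have hsimp1 : a + 2 - 1 = a + 1 := by omega
  have hsimp2 : a + 2 - 2 = a := by omega
  have hsimp3 : m + 2 - 1 = m + 1 := by omega
  have hsimp4 : m + 2 - 2 = m := by omega
  rw [hsimp1, hsimp2, hsimp3, hsimp4]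
  apply Nat.eq_of_mul_eq_mul_right hpos
  calc (a+2)*(a+1) * ((m+2).choose (a+2)) * (a.factorial * (m-a).factorial)
      = (m+2).choose (a+2) * (a+2).factorial * (m+2-(a+2)).factorial := by
        rw [hfac, hsub]; ring
    _ = (m+2).factorial := h1
    _ = (m+2)*(m+1) * (m.choose a * a.factorial * (m-a).factorial) := by rw [hfac2, h2]
    _ = (m+2)*(m+1) * m.choose a * (a.factorial * (m-a).factorial) := by ring

lemma div_from_hdiv (n k : ℕ) (hk : 3 ≤ k) (hkn : k ≤ n)
    (hdiv : (Nat.factorial k * Nat.factorial (n - k)) ∣ Nat.factorial (n - 2)) :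
    (k*(k-1)) ∣ (n-2).choose (k-2) := by
  obtain ⟨a, rfl⟩ : ∃ a, k = a + 2 := ⟨k-2, by omega⟩
  obtain ⟨m, rfl⟩ : ∃ m, n = m + 2 := ⟨n-2, by omega⟩
  have ham : a ≤ m := by omega
  have hsub : m + 2 - (a+2) = m - a := by omega
  have hsimp1 : a + 2 - 1 = a + 1 := by omega
  have hsimp2 : a + 2 - 2 = a := by omega
  have hsimp4 : m + 2 - 2 = m := by omega
  rw [hsimp1, hsimp2, hsimp4]
  rw [hsub, hsimp4] at hdiv
  have h2 := Nat.choose_mul_factorial_mul_factorial ham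
  rw [← h2] at hdiv
  have hdiv2 : (a+2).factorial ∣ m.choose a * a.factorial :=
    (Nat.mul_dvd_mul_iff_right (Nat.factorial_pos (m-a))).mp hdiv
  have hfac : (a+2).factorial = ((a+2)*(a+1))*a.factorial := by
    rw [Nat.factorial_succ, Nat.factorial_succ]; ring
  rw [hfac] at hdiv2
  exact (Nat.mul_dvd_mul_iff_right (Nat.factorial_pos a)).mp hdiv2

lemma even_choose (n k : ℕ) (hk : 3 ≤ k) (hkn : k ≤ n)
    (hdiv : (Nat.factorial k * Nat.factorial (n - k)) ∣ Nat.factorial (n - 2)) :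
    Even (n.choose k) := by
  obtain ⟨t, ht⟩ := div_from_hdiv n k hk hkn hdiv
  have hkey := key_identity_s1 n k hk hkn
  rw [ht] at hkey
  have hpos : 0 < k*(k-1) := by
    apply Nat.mul_pos <;> omega
  have : n.choose k = n*(n-1) * t := by
    apply Nat.eq_of_mul_eq_mul_left hpos
    rw [hkey]; ring
  rw [this]
  have heven : Even (n*(n-1)) := by
    have := Nat.even_mul_succ_self (n-1)
    have hn : n - 1 + 1 = n := by omega
    rw [hn] at this
    rwa [Nat.mul_comm]
  exact heven.mul_right t

lemma exp_factor (θ : ℝ) :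
    1 - Complex.exp ((θ:ℂ) * Complex.I)
      = (-2*Complex.I) * (Real.sin (θ/2) : ℂ) * Complex.exp (((θ/2 : ℝ):ℂ) * Complex.I) := by
  rw [Complex.exp_mul_I, Complex.exp_mul_I]
  rw [← Complex.ofReal_cos, ← Complex.ofReal_sin, ← Complex.ofReal_cos, ← Complex.ofReal_sin]
  have h1 : Real.sin θ = 2 * Real.sin (θ/2) * Real.cos (θ/2) := by
    have := Real.sin_two_mul (θ/2)
    rw [show 2*(θ/2) = θ by ring] at this
    linarith
  have h2 : Real.sin (θ/2)^2 = (1 - Real.cos θ)/2 := by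
    have ha := Real.sin_sq_add_cos_sq (θ/2)
    have hb := Real.cos_two_mul (θ/2)
    rw [show 2*(θ/2) = θ by ring] at hb
    nlinarith
  simp only [Complex.ext_iff, Complex.sub_re, Complex.sub_im, Complex.add_re, Complex.add_im,
    Complex.one_re, Complex.one_im, Complex.mul_re, Complex.mul_im, Complex.ofReal_re,
    Complex.ofReal_im, Complex.I_re, Complex.I_im, Complex.neg_re, Complex.neg_im,
    Complex.re_ofNat, Complex.im_ofNat]
  constructor <;> nlinarith [h1, h2]

lemma sum_powerset_cos {ι : Type*} [DecidableEq ι] (s : Finset ι) (θ : ι → ℝ) :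
    ∑ U ∈ s.powerset, (-1:ℝ)^U.card * Real.cos (∑ v ∈ U, θ v)
      = (∏ v ∈ s, (1 - Complex.exp ((θ v : ℂ) * Complex.I))).re := by
  have h1 : ∀ U ∈ s.powerset, ((-1:ℝ)^U.card * Real.cos (∑ v ∈ U, θ v))
      = (∏ v ∈ U, (-(Complex.exp ((θ v : ℂ) * Complex.I)))).re := by
    intro U _
    rw [show (∏ v ∈ U, (-(Complex.exp ((θ v :ℂ) * Complex.I))))
        = (-1:ℂ)^U.card * ∏ v ∈ U, Complex.exp ((θ v : ℂ) * Complex.I) by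
      rw [← Finset.prod_const, ← Finset.prod_mul_distrib]
      exact Finset.prod_congr rfl (fun v _ => by ring)]
    rw [← Complex.exp_sum]
    rw [show (∑ v ∈ U, (θ v : ℂ) * Complex.I) = ((∑ v ∈ U, θ v : ℝ) : ℂ) * Complex.I by
      push_cast; rw [Finset.sum_mul]]
    rw [show ((-1:ℂ)^U.card) = (((-1:ℝ)^U.card : ℝ) : ℂ) by push_cast; ring]
    rw [Complex.re_ofReal_mul, Complex.exp_ofReal_mul_I_re]
  rw [Finset.sum_congr rfl h1, ← Complex.re_sum]
  congr 1
  have hpa := Finset.prod_add (fun v => -(Complex.exp ((θ v : ℂ) * Complex.I)))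
    (fun _ => (1:ℂ)) s
  simp only [Finset.prod_const_one, mul_one] at hpa
  rw [← hpa]
  exact Finset.prod_congr rfl (fun v _ => by ring)

lemma prod_one_sub_exp {ι : Type*} (s : Finset ι) (θ : ι → ℝ) :
    ∏ v ∈ s, (1 - Complex.exp ((θ v : ℂ) * Complex.I))
      = (-2*Complex.I)^s.card * ((∏ v ∈ s, Real.sin (θ v / 2) : ℝ) : ℂ)
        * Complex.exp (((∑ v ∈ s, θ v / 2 : ℝ) : ℂ) * Complex.I) := by
  rw [Finset.prod_congr rfl (fun v _ => exp_factor (θ v))]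
  rw [Finset.prod_mul_distrib, Finset.prod_mul_distrib, Finset.prod_const]
  rw [← Complex.exp_sum]
  congr 2
  · push_cast
    rfl
  · push_cast
    rw [Finset.sum_mul]

/-- Here a simple graph on `[n]` is identified with its edge set `W`, a set of 2-element
subsets of `[n]`, and a `k`-uniform hypergraph on `[n]` is identified with its edge set `U`,
a set of `k`-element subsets of `[n]`.  The incidence number `i(G,H)` is the number of pairs
`(u,v) ∈ E(G) × E(H)` with `u ⊆ v`. -/
theorem stmt_1 (n k : ℕ) (hk : 3 ≤ k) (hkn : k ≤ n)
    (hdiv : (Nat.factorial k * Nat.factorial (n - k)) ∣ Nat.factorial (n - 2)) :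
    (∑ W ∈ (Finset.powersetCard 2 (Finset.univ : Finset (Fin n))).powerset,
      ∑ U ∈ (Finset.powersetCard k (Finset.univ : Finset (Fin n))).powerset,
        (-1 : ℝ) ^ U.card *
          Real.cos (4 * Real.pi / ((k : ℝ) * ((k : ℝ) - 1)) *
            (((W ×ˢ U).filter fun p => p.1 ⊆ p.2).card : ℝ))) = 0 ↔
      diagonalRamsey k ≤ n := by
  have hn : 0 < n := by omega
  have hk3R : (3:ℝ) ≤ (k:ℝ) := by exact_mod_cast hk
  have hkR : (0:ℝ) < (k:ℝ) * ((k:ℝ) - 1) := by nlinarith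
  set c : ℝ := 4 * Real.pi / ((k:ℝ) * ((k:ℝ) - 1)) with hc
  have hcpos : 0 < c := div_pos (by positivity) hkR
  set S2 := Finset.powersetCard 2 (Finset.univ : Finset (Fin n)) with hS2
  set Sk := Finset.powersetCard k (Finset.univ : Finset (Fin n)) with hSk
  set e : Finset (Finset (Fin n)) → Finset (Fin n) → ℕ :=
    fun W v => (W.filter (· ⊆ v)).card with he
  -- choose 2 arithmetic
  have hK2 : 2 * k.choose 2 = k * (k-1) := by
    have hev : 2 ∣ (k-1) * ((k-1)+1) := (Nat.even_mul_succ_self (k-1)).two_dvd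
    rw [show (k-1)+1 = k by omega] at hev
    rw [Nat.choose_two_right, Nat.mul_div_cancel' (by rwa [Nat.mul_comm] at hev)]
  have hKR : ((k.choose 2 : ℕ) : ℝ) = (k:ℝ) * ((k:ℝ)-1) / 2 := by
    have : ((2 * k.choose 2 : ℕ) : ℝ) = ((k * (k-1) : ℕ) : ℝ) := by rw [hK2]
    push_cast [Nat.cast_sub (show 1 ≤ k by omega)] at this
    linarith
  -- bound on e
  have hebound : ∀ W ∈ S2.powerset, ∀ v ∈ Sk, e W v ≤ k.choose 2 := by
    intro W hW v hv
    rw [mem_powerset] at hW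
    rw [hSk, mem_powersetCard_univ] at hv
    have hsub : W.filter (· ⊆ v) ⊆ powersetCard 2 v := by
      intro w hw
      rw [mem_filter] at hw
      have := hW hw.1
      rw [hS2, mem_powersetCard] at this
      rw [mem_powersetCard]
      exact ⟨hw.2, this.2⟩
    calc e W v ≤ (powersetCard 2 v).card := card_le_card hsub
      _ = k.choose 2 := by rw [card_powersetCard, hv]
  -- sin facts
  have hsin_nonneg : ∀ W ∈ S2.powerset, ∀ v ∈ Sk,
      0 ≤ Real.sin (c * (e W v : ℝ) / 2) := by
    intro W hW v hv
    apply Real.sin_nonneg_of_nonneg_of_le_pi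
    · positivity
    · have h1 : (e W v : ℝ) ≤ (k.choose 2 : ℝ) := by
        exact_mod_cast hebound W hW v hv
      rw [hKR] at h1
      rw [hc, div_mul_eq_mul_div, div_div,
        div_le_iff₀ (by positivity : (0:ℝ) < (k:ℝ)*((k:ℝ)-1)*2)]
      nlinarith [mul_le_mul_of_nonneg_left h1 Real.pi_pos.le]
  have hsin_zero_iff : ∀ W ∈ S2.powerset, ∀ v ∈ Sk,
      (Real.sin (c * (e W v : ℝ) / 2) = 0 ↔ (e W v = 0 ∨ e W v = k.choose 2)) := by
    intro W hW v hv
    constructor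
    · intro h0
      by_contra hcon
      push_neg at hcon
      have hpos : 0 < e W v := Nat.pos_of_ne_zero hcon.1
      have hlt : e W v < k.choose 2 := lt_of_le_of_ne (hebound W hW v hv) hcon.2
      have h1 : (0:ℝ) < c * (e W v : ℝ) / 2 := by
        have : (0:ℝ) < (e W v : ℝ) := by exact_mod_cast hpos
        positivity
      have h2 : c * (e W v : ℝ) / 2 < Real.pi := by
        have hlt' : (e W v : ℝ) < (k.choose 2 : ℝ) := by exact_mod_cast hlt
        rw [hKR] at hlt'
        rw [hc, div_mul_eq_mul_div, div_div,
          div_lt_iff₀ (by positivity : (0:ℝ) < (k:ℝ)*((k:ℝ)-1)*2)]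
        nlinarith [mul_lt_mul_of_pos_left hlt' Real.pi_pos]
      exact absurd h0 (ne_of_gt (Real.sin_pos_of_pos_of_lt_pi h1 h2))
    · intro h
      rcases h with h | h
      · rw [h]; simp
      · rw [h, hKR]
        rw [show c * ((k:ℝ) * ((k:ℝ)-1) / 2) / 2 = Real.pi by
          rw [hc]; field_simp [show (k:ℝ) - 1 ≠ 0 by linarith]; ring]
        exact Real.sin_pi
  -- inner sum rewrite
  have hin : ∀ W ∈ S2.powerset,
      (∑ U ∈ Sk.powerset, (-1 : ℝ) ^ U.card *
        Real.cos (c * (((W ×ˢ U).filter fun p => p.1 ⊆ p.2).card : ℝ)))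
      = (∏ v ∈ Sk, (1 - Complex.exp (((c * (e W v : ℝ) : ℝ) : ℂ) * Complex.I))).re := by
    intro W _
    rw [← sum_powerset_cos Sk (fun v => c * (e W v : ℝ))]
    apply Finset.sum_congr rfl
    intro U _
    congr 2
    rw [incidence_sum]
    push_cast
    rw [Finset.mul_sum]
  -- divisibility
  obtain ⟨t, ht⟩ := div_from_hdiv n k hk hkn hdiv
  -- the exponential is 1
  have hexp : ∀ W ∈ S2.powerset,
      Complex.exp (((∑ v ∈ Sk, (c * (e W v : ℝ)) / 2 : ℝ) : ℂ) * Complex.I) = 1 := by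
    intro W hW
    rw [mem_powerset] at hW
    have hsum : (∑ v ∈ Sk, (c * (e W v : ℝ)) / 2)
        = ((W.card * t : ℕ) : ℝ) * (2 * Real.pi) := by
      have h1 : (∑ v ∈ Sk, (c * (e W v : ℝ)) / 2)
          = (c/2) * ((∑ v ∈ Sk, e W v : ℕ) : ℝ) := by
        push_cast
        rw [Finset.mul_sum]
        exact Finset.sum_congr rfl (fun v _ => by ring)
      rw [h1, hSk, sum_e (by omega) W hW, ht]
      push_cast [Nat.cast_sub (show 1 ≤ k by omega)]
      rw [hc]
      field_simp [show (k:ℝ) - 1 ≠ 0 by linarith]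
      ring
    rw [hsum]
    have := Complex.exp_int_mul_two_pi_mul_I ((W.card * t : ℕ) : ℤ)
    rw [show ((((W.card * t : ℕ) : ℝ) * (2 * Real.pi) : ℝ) : ℂ) * Complex.I
        = (((W.card * t : ℕ) : ℤ) : ℂ) * (2 * (Real.pi : ℂ) * Complex.I) by
      push_cast; ring]
    exact this
  -- cardinality and evenness
  have hNcard : Sk.card = n.choose k := by
    rw [hSk, card_powersetCard, card_univ, Fintype.card_fin]
  obtain ⟨M, hM⟩ := even_choose n k hk hkn hdiv
  have hN2M : Sk.card = 2 * M := by rw [hNcard, hM]; ring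
  set P : Finset (Finset (Fin n)) → ℝ :=
    fun W => ∏ v ∈ Sk, Real.sin (c * (e W v : ℝ) / 2) with hP
  -- evaluate products
  have hprod : ∀ W ∈ S2.powerset,
      (∏ v ∈ Sk, (1 - Complex.exp (((c * (e W v : ℝ) : ℝ) : ℂ) * Complex.I))).re
      = (-4:ℝ)^M * P W := by
    intro W hW
    rw [prod_one_sub_exp Sk (fun v => c * (e W v : ℝ)), hexp W hW, mul_one, hN2M]
    rw [pow_mul, show ((-2)*Complex.I)^2 = ((-4:ℝ):ℂ) by
      rw [mul_pow, Complex.I_sq]; norm_num]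
    rw [← Complex.ofReal_pow, ← Complex.ofReal_mul, Complex.ofReal_re]
  -- assemble
  have htotal : (∑ W ∈ S2.powerset,
      ∑ U ∈ Sk.powerset, (-1 : ℝ) ^ U.card *
        Real.cos (c * (((W ×ˢ U).filter fun p => p.1 ⊆ p.2).card : ℝ)))
      = (-4:ℝ)^M * ∑ W ∈ S2.powerset, P W := by
    rw [Finset.mul_sum]
    apply Finset.sum_congr rfl
    intro W hW
    rw [hin W hW, hprod W hW]
  rw [htotal]
  have hr0 : ((-4:ℝ)^M) ≠ 0 := by positivity
  rw [mul_eq_zero, or_iff_right hr0]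
  have hPnn : ∀ W ∈ S2.powerset, 0 ≤ P W := by
    intro W hW
    exact Finset.prod_nonneg (fun v hv => hsin_nonneg W hW v hv)
  rw [Finset.sum_eq_zero_iff_of_nonneg hPnn]
  have hPzero : ∀ W ∈ S2.powerset, (P W = 0 ↔
      ∃ v ∈ Sk, e W v = 0 ∨ e W v = k.choose 2) := by
    intro W hW
    rw [hP, Finset.prod_eq_zero_iff]
    constructor
    · rintro ⟨v, hv, h0⟩
      exact ⟨v, hv, (hsin_zero_iff W hW v hv).mp h0⟩
    · rintro ⟨v, hv, h0⟩
      exact ⟨v, hv, (hsin_zero_iff W hW v hv).mpr h0⟩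
  rw [diagonalRamsey_le_iff k n hn, graph_iff_W n k]
  constructor
  · intro h W hW
    exact (hPzero W hW).mp (h W hW)
  · intro h W hW
    exact (hPzero W hW).mpr (h W hW)
end

section
/- Let n ≥ k ≥ 2 be positive integers. Then n ≥ R(k) holds if and only if for every real number q and every integer m, Σ_{U ⊆ C([n],k)} (-1)^{(m+1)|U|} ∏_{e ∈ C([n],2)} cos( (2π/(k(k-1))) ( q·C(n-2,k-2) + m·mult(e,U) ) ) = 0, where the sum is over all subsets U of the set of k-element subsets of [n] and the product is over all 2-element subsets e of [n]. -/
open Finset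

namespace RamseyAux
open Complex



section Ramsey

lemma isNClique_comap {V W : Type*} (f : V ↪ W) (G : SimpleGraph W) {s : Finset V} {m : ℕ}
    (h : (G.comap f).IsNClique m s) : G.IsNClique m (s.map f) := by
  constructor
  · intro x hx y hy hxy
    simp only [Finset.coe_map, Set.mem_image, Finset.mem_coe] at hx hy
    obtain ⟨a, ha, rfl⟩ := hx
    obtain ⟨b, hb, rfl⟩ := hy
    exact h.isClique ha hb (fun hab => hxy (by rw [hab]))
  · rw [Finset.card_map]; exact h.card_eq

lemma comap_compl {V W : Type*} (f : V ↪ W) (G : SimpleGraph W) :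
    (Gᶜ).comap f = (G.comap f)ᶜ := by
  ext x y
  simp only [SimpleGraph.comap_adj, SimpleGraph.compl_adj]
  exact and_congr_left (fun _ => ⟨fun h hxy => h (congrArg f hxy), fun h hf => h (f.injective hf)⟩)

/-- Finite Ramsey's theorem. -/
lemma ramsey_exists : ∀ a b : ℕ, ∃ N : ℕ, ∀ (V : Type) [Fintype V] (G : SimpleGraph V),
    N ≤ Fintype.card V →
    (∃ s : Finset V, G.IsNClique a s) ∨ (∃ s : Finset V, Gᶜ.IsNClique b s) := by
  suffices H : ∀ c a b : ℕ, a + b ≤ c → ∃ N : ℕ, ∀ (V : Type) [Fintype V] (G : SimpleGraph V),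
      N ≤ Fintype.card V →
      (∃ s : Finset V, G.IsNClique a s) ∨ (∃ s : Finset V, Gᶜ.IsNClique b s) by
    intro a b; exact H (a+b) a b le_rfl
  intro c
  induction c with
  | zero =>
    intro a b hab
    obtain ⟨rfl, rfl⟩ : a = 0 ∧ b = 0 := by omega
    exact ⟨0, fun V _ G _ => Or.inl ⟨∅, by simp⟩⟩
  | succ c ih =>
    intro a b hab
    match a, b with
    | 0, b => exact ⟨0, fun V _ G _ => Or.inl ⟨∅, by simp⟩⟩
    | a, 0 => exact ⟨0, fun V _ G _ => Or.inr ⟨∅, by simp⟩⟩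
    | a+1, b+1 =>
      obtain ⟨Na, hNa⟩ := ih a (b+1) (by omega)
      obtain ⟨Nb, hNb⟩ := ih (a+1) b (by omega)
      refine ⟨Na + Nb + 1, ?_⟩
      intro V _ G hcard
      classical
      have hne : Nonempty V := by
        rw [← Fintype.card_pos_iff]; omega
      obtain ⟨v⟩ := hne
      set A : Finset V := Finset.univ.filter (fun u => G.Adj v u) with hA
      set B : Finset V := Finset.univ.filter (fun u => u ≠ v ∧ ¬ G.Adj v u) with hB
      have hcards : Fintype.card V ≤ A.card + B.card + 1 := by
        have hsub : (Finset.univ : Finset V) ⊆ insert v (A ∪ B) := by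
          intro u _
          by_cases huv : u = v
          · exact Finset.mem_insert.2 (Or.inl huv)
          · refine Finset.mem_insert.2 (Or.inr (Finset.mem_union.2 ?_))
            by_cases hadj : G.Adj v u
            · exact Or.inl (by simp [hA, hadj])
            · exact Or.inr (by simp [hB, huv, hadj])
        calc Fintype.card V = (Finset.univ : Finset V).card := (Finset.card_univ).symm
          _ ≤ (insert v (A ∪ B)).card := Finset.card_le_card hsub
          _ ≤ (A ∪ B).card + 1 := Finset.card_insert_le _ _
          _ ≤ A.card + B.card + 1 := by
              have := Finset.card_union_le A B; omega
      have hcase : Na ≤ A.card ∨ Nb ≤ B.card := by omega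
      rcases hcase with hc | hc
      · -- neighbors
        have hcoe : Fintype.card {x // x ∈ A} = A.card := Fintype.card_coe A
        have := hNa {x // x ∈ A} (G.comap (Function.Embedding.subtype _)) (by omega)
        rcases this with ⟨s, hs⟩ | ⟨s, hs⟩
        · -- a-clique among neighbors; add v
          have hs' : G.IsNClique a (s.map (Function.Embedding.subtype _)) :=
            isNClique_comap _ _ hs
          refine Or.inl ⟨insert v (s.map (Function.Embedding.subtype _)), hs'.insert ?_⟩
          intro u hu
          rw [Finset.mem_map] at hu
          obtain ⟨⟨u', hu'⟩, _, rfl⟩ := hu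
          simpa [hA] using (Finset.mem_filter.1 hu').2
        · rw [← comap_compl] at hs
          exact Or.inr ⟨s.map (Function.Embedding.subtype _), isNClique_comap _ _ hs⟩
      · -- non-neighbors
        have hcoe : Fintype.card {x // x ∈ B} = B.card := Fintype.card_coe B
        have := hNb {x // x ∈ B} (G.comap (Function.Embedding.subtype _)) (by omega)
        rcases this with ⟨s, hs⟩ | ⟨s, hs⟩
        · exact Or.inl ⟨s.map (Function.Embedding.subtype _), isNClique_comap _ _ hs⟩
        · rw [← comap_compl] at hs
          have hs' : Gᶜ.IsNClique b (s.map (Function.Embedding.subtype _)) :=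
            isNClique_comap _ _ hs
          refine Or.inr ⟨insert v (s.map (Function.Embedding.subtype _)), hs'.insert ?_⟩
          intro u hu
          rw [Finset.mem_map] at hu
          obtain ⟨⟨u', hu'⟩, _, rfl⟩ := hu
          have := (Finset.mem_filter.1 hu').2
          exact ⟨Ne.symm this.1, fun h => this.2 h⟩

end Ramsey

variable {n : ℕ}

abbrev EE (n : ℕ) : Finset (Finset (Fin n)) := powersetCard 2 univ
abbrev KK (n k : ℕ) : Finset (Finset (Fin n)) := powersetCard k univ
def chi (T : Finset (Finset (Fin n))) (e : Finset (Fin n)) : ℤ := if e ∈ T then 1 else -1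
def ww (T : Finset (Finset (Fin n))) (S : Finset (Fin n)) : ℤ :=
  ∑ e ∈ (EE n).filter (· ⊆ S), chi T e
def sig (T : Finset (Finset (Fin n))) : ℤ := ∑ e ∈ EE n, chi T e

def RamP (k n : ℕ) : Prop := ∀ G : SimpleGraph (Fin n),
    (∃ s : Finset (Fin n), G.IsNClique k s) ∨ (∃ s : Finset (Fin n), Gᶜ.IsNClique k s)

lemma ramP_mono {k m n : ℕ} (h : m ≤ n) (hm : RamP k m) : RamP k n := by
  intro G
  have f : Fin m ↪ Fin n := Fin.castLEEmb h
  rcases hm (G.comap f) with ⟨s, hs⟩ | ⟨s, hs⟩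
  · exact Or.inl ⟨s.map f, isNClique_comap _ _ hs⟩
  · rw [← comap_compl] at hs
    exact Or.inr ⟨s.map f, isNClique_comap _ _ hs⟩


lemma abs_chi (T : Finset (Finset (Fin n))) (e : Finset (Fin n)) : |chi T e| = 1 := by
  unfold chi; split <;> simp

/-- Lemma A: product of cosines expands as a sum over sign choices. -/
lemma cos_prod (x : Finset (Fin n) → ℝ) :
    (2:ℂ)^((EE n).card) * ∏ e ∈ EE n, ((Real.cos (x e) : ℝ) : ℂ)
      = ∑ T ∈ (EE n).powerset,
          Complex.exp ((∑ e ∈ EE n, (chi T e : ℂ) * (x e : ℂ)) * Complex.I) := by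
  rw [← Finset.prod_const (2:ℂ), ← Finset.prod_mul_distrib]
  have h2 : ∀ e ∈ EE n, (2:ℂ) * ((Real.cos (x e) : ℝ) : ℂ)
      = Complex.exp ((x e : ℂ) * I) + Complex.exp (-(x e : ℂ) * I) := by
    intro e _
    rw [Complex.ofReal_cos, Complex.cos]
    ring
  rw [Finset.prod_congr rfl h2, Finset.prod_add]
  refine Finset.sum_congr rfl ?_
  intro T hT
  rw [Finset.mem_powerset] at hT
  rw [← Complex.exp_sum, ← Complex.exp_sum, ← Complex.exp_add]
  congr 1
  have hsplit : ∑ e ∈ EE n, (chi T e : ℂ) * (x e : ℂ)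
      = ∑ e ∈ T, (x e : ℂ) + ∑ e ∈ EE n \ T, -(x e : ℂ) := by
    rw [← Finset.sum_filter_add_sum_filter_not (EE n) (· ∈ T)]
    have h1 : (EE n).filter (· ∈ T) = T := by
      ext e; simp only [Finset.mem_filter]
      exact ⟨fun h => h.2, fun h => ⟨hT h, h⟩⟩
    have h2 : (EE n).filter (¬ · ∈ T) = EE n \ T := by
      ext e; simp [Finset.mem_sdiff]
    rw [h1, h2]
    congr 1
    · apply Finset.sum_congr rfl; intro e he; simp [chi, he]
    · apply Finset.sum_congr rfl; intro e he
      rw [Finset.mem_sdiff] at he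
      simp [chi, he.2]
  rw [hsplit, add_mul, Finset.sum_mul, Finset.sum_mul]

/-- Lemma B: sum over subsets of products. -/
lemma sum_powerset_prod {α : Type*} [DecidableEq α] (s : Finset α) (h : α → ℂ) :
    ∑ U ∈ s.powerset, ∏ S ∈ U, h S = ∏ S ∈ s, (1 + h S) := by
  have := Finset.prod_add h (fun _ => (1:ℂ)) s
  simp only [Finset.prod_const_one, mul_one] at this
  rw [Finset.prod_congr rfl (fun S _ => add_comm (h S) 1)] at this
  exact this.symm

/-- Lemma C: double-counting swap. -/
lemma chi_mult_swap (T : Finset (Finset (Fin n))) (U : Finset (Finset (Fin n))) :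
    ∑ e ∈ EE n, chi T e * ((U.filter fun S => e ⊆ S).card : ℤ)
      = ∑ S ∈ U, ww T S := by
  have h1 : ∀ e, chi T e * ((U.filter fun S => e ⊆ S).card : ℤ)
      = ∑ S ∈ U, if e ⊆ S then chi T e else 0 := by
    intro e
    rw [Finset.sum_ite, Finset.sum_const_zero, add_zero, Finset.sum_const,
      nsmul_eq_mul, mul_comm]
  rw [Finset.sum_congr rfl (fun e _ => h1 e), Finset.sum_comm]
  refine Finset.sum_congr rfl fun S _ => ?_
  rw [ww, Finset.sum_filter]


lemma filter_sub_eq (S : Finset (Fin n)) :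
    (EE n).filter (· ⊆ S) = powersetCard 2 S := by
  ext e
  simp only [Finset.mem_filter, Finset.mem_powersetCard_univ, Finset.mem_powersetCard,
    Finset.subset_univ, true_and]
  exact and_comm

lemma ww_eq (T : Finset (Finset (Fin n))) (S : Finset (Fin n)) :
    ww T S = ∑ e ∈ powersetCard 2 S, chi T e := by
  rw [ww, filter_sub_eq]

lemma card_edges (S : Finset (Fin n)) {k : ℕ} (hS : S.card = k) :
    (powersetCard 2 S).card = k.choose 2 := by
  rw [Finset.card_powersetCard, hS]

/-- Lemma D: number of k-subsets containing a fixed 2-set. -/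
lemma count_supersets {k : ℕ} (hk : 2 ≤ k) (hkn : k ≤ n) {e : Finset (Fin n)}
    (he : e ∈ EE n) : ((KK n k).filter fun S => e ⊆ S).card = (n-2).choose (k-2) := by
  rw [Finset.mem_powersetCard_univ] at he
  have hcard : ((univ : Finset (Fin n)) \ e).card = n - 2 := by
    rw [Finset.card_sdiff_of_subset (Finset.subset_univ e), Finset.card_univ, Fintype.card_fin, he]
  rw [← hcard, ← Finset.card_powersetCard]
  apply Finset.card_nbij' (fun S => S \ e) (fun V => V ∪ e)
  · intro S hS
    rw [Finset.mem_coe, Finset.mem_filter, Finset.mem_powersetCard_univ] at hS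
    simp only [Finset.mem_coe, Finset.mem_powersetCard]
    refine ⟨fun x hx => ?_, ?_⟩
    · rw [Finset.mem_sdiff] at hx ⊢
      exact ⟨Finset.mem_univ x, hx.2⟩
    · rw [Finset.card_sdiff_of_subset hS.2, hS.1, he]
  · intro V hV
    rw [Finset.mem_coe, Finset.mem_powersetCard] at hV
    have hdisj : Disjoint V e := by
      rw [Finset.disjoint_left]
      intro x hxV hxe
      have := hV.1 hxV
      rw [Finset.mem_sdiff] at this
      exact this.2 hxe
    simp only [Finset.mem_coe, Finset.mem_filter, Finset.mem_powersetCard_univ]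
    refine ⟨?_, Finset.subset_union_right⟩
    rw [Finset.card_union_of_disjoint hdisj, hV.2, he]
    omega
  · intro S hS
    rw [Finset.mem_coe, Finset.mem_filter] at hS
    exact Finset.sdiff_union_of_subset hS.2
  · intro V hV
    rw [Finset.mem_coe, Finset.mem_powersetCard] at hV
    apply Finset.union_sdiff_cancel_right
    rw [Finset.disjoint_left]
    intro x hxV hxe
    have := hV.1 hxV
    rw [Finset.mem_sdiff] at this
    exact this.2 hxe


/-- Lemma E: column sums. -/
lemma sum_ww {k : ℕ} (hk : 2 ≤ k) (hkn : k ≤ n) (T : Finset (Finset (Fin n))) :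
    ∑ S ∈ KK n k, ww T S = ((n-2).choose (k-2) : ℤ) * sig T := by
  rw [← chi_mult_swap T (KK n k), sig, Finset.mul_sum]
  refine Finset.sum_congr rfl fun e he => ?_
  rw [count_supersets hk hkn he, mul_comm]

lemma ww_le (T : Finset (Finset (Fin n))) {S : Finset (Fin n)} {k : ℕ} (hS : S.card = k) :
    |ww T S| ≤ (k.choose 2 : ℤ) := by
  rw [ww_eq]
  calc |∑ e ∈ powersetCard 2 S, chi T e| ≤ ∑ e ∈ powersetCard 2 S, |chi T e| :=
        Finset.abs_sum_le_sum_abs _ _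
    _ ≤ ∑ e ∈ powersetCard 2 S, (1:ℤ) :=
        Finset.sum_le_sum (fun e _ => by unfold chi; split <;> simp)
    _ = (k.choose 2 : ℤ) := by rw [Finset.sum_const, card_edges S hS]; simp

lemma ww_eq_top (T : Finset (Finset (Fin n))) {S : Finset (Fin n)} {k : ℕ} (hS : S.card = k)
    (h : ∀ e ∈ powersetCard 2 S, e ∈ T) : ww T S = (k.choose 2 : ℤ) := by
  rw [ww_eq, Finset.sum_congr rfl (fun e he => by unfold chi; rw [if_pos (h e he)]),
    Finset.sum_const, card_edges S hS]
  simp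

lemma ww_eq_bot (T : Finset (Finset (Fin n))) {S : Finset (Fin n)} {k : ℕ} (hS : S.card = k)
    (h : ∀ e ∈ powersetCard 2 S, e ∉ T) : ww T S = -(k.choose 2 : ℤ) := by
  rw [ww_eq, Finset.sum_congr rfl (fun e he => by unfold chi; rw [if_neg (h e he)]),
    Finset.sum_const, card_edges S hS]
  simp

lemma ww_lt_top (T : Finset (Finset (Fin n))) {S : Finset (Fin n)} {k : ℕ} (hS : S.card = k)
    (h : ∃ e ∈ powersetCard 2 S, e ∉ T) : ww T S < (k.choose 2 : ℤ) := by
  obtain ⟨e0, he0, he0T⟩ := h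
  rw [ww_eq]
  calc ∑ e ∈ powersetCard 2 S, chi T e < ∑ e ∈ powersetCard 2 S, 1 := by
        apply Finset.sum_lt_sum
        · intro e _; unfold chi; split <;> omega
        · exact ⟨e0, he0, by unfold chi; rw [if_neg he0T]; omega⟩
    _ = (k.choose 2 : ℤ) := by rw [Finset.sum_const, card_edges S hS]; simp

lemma ww_gt_bot (T : Finset (Finset (Fin n))) {S : Finset (Fin n)} {k : ℕ} (hS : S.card = k)
    (h : ∃ e ∈ powersetCard 2 S, e ∈ T) : -(k.choose 2 : ℤ) < ww T S := by
  obtain ⟨e0, he0, he0T⟩ := h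
  rw [ww_eq]
  calc -(k.choose 2 : ℤ) = ∑ e ∈ powersetCard 2 S, (-1 : ℤ) := by
        rw [Finset.sum_const, card_edges S hS]; simp
    _ < ∑ e ∈ powersetCard 2 S, chi T e := by
        apply Finset.sum_lt_sum
        · intro e _; unfold chi; split <;> omega
        · exact ⟨e0, he0, by unfold chi; rw [if_pos he0T]; omega⟩


lemma phase_split (T U : Finset (Finset (Fin n))) (θ A : ℝ) (m : ℤ) :
    ∑ e ∈ EE n, (chi T e : ℂ) * ((θ * (A + m * ((U.filter fun S => e ⊆ S).card : ℝ)) : ℝ) : ℂ)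
      = (θ : ℂ) * (A : ℂ) * (sig T : ℂ) + (θ : ℂ) * (m : ℂ) * (∑ S ∈ U, (ww T S : ℂ)) := by
  have swap := chi_mult_swap T U
  have swapC : ∑ e ∈ EE n, (chi T e : ℂ) * ((U.filter fun S => e ⊆ S).card : ℂ)
      = ∑ S ∈ U, (ww T S : ℂ) := by
    exact_mod_cast congrArg (Int.cast : ℤ → ℂ) swap
  have sigC : ∑ e ∈ EE n, (chi T e : ℂ) = (sig T : ℂ) := by
    rw [sig]; push_cast; ring
  calc ∑ e ∈ EE n, (chi T e : ℂ) * ((θ * (A + m * ((U.filter fun S => e ⊆ S).card : ℝ)) : ℝ) : ℂ)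
      = ∑ e ∈ EE n, ((θ:ℂ) * A * (chi T e : ℂ)
          + (θ:ℂ) * m * ((chi T e : ℂ) * ((U.filter fun S => e ⊆ S).card : ℂ))) := by
        refine Finset.sum_congr rfl fun e _ => ?_
        push_cast
        ring
    _ = (θ:ℂ) * A * (∑ e ∈ EE n, (chi T e : ℂ))
          + (θ:ℂ) * m * (∑ e ∈ EE n, (chi T e : ℂ) * ((U.filter fun S => e ⊆ S).card : ℂ)) := by
        rw [Finset.sum_add_distrib, ← Finset.mul_sum, ← Finset.mul_sum]
    _ = (θ : ℂ) * (A : ℂ) * (sig T : ℂ) + (θ : ℂ) * (m : ℂ) * (∑ S ∈ U, (ww T S : ℂ)) := by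
        rw [sigC, swapC]

lemma main_identity (k : ℕ) (θ A : ℝ) (m : ℤ) :
    (2:ℂ)^((EE n).card) *
      ((∑ U ∈ (KK n k).powerset, (-1 : ℝ) ^ ((m + 1) * (U.card : ℤ)) *
        ∏ e ∈ EE n, Real.cos (θ * (A + (m : ℝ) * ((U.filter fun S => e ⊆ S).card : ℝ))) : ℝ) : ℂ)
    = ∑ T ∈ (EE n).powerset,
        Complex.exp ((θ : ℂ) * (A : ℂ) * (sig T : ℂ) * Complex.I) *
        ∏ S ∈ KK n k, (1 + (-1:ℂ)^(m+1) * Complex.exp ((θ:ℂ) * (m:ℂ) * (ww T S : ℂ) * Complex.I)) := by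
  push_cast
  rw [Finset.mul_sum]
  calc ∑ U ∈ (KK n k).powerset, (2:ℂ)^((EE n).card) * ((-1 : ℂ) ^ ((m + 1) * (U.card : ℤ)) *
        ∏ e ∈ EE n, Complex.cos ((θ:ℂ) * ((A:ℂ) + (m : ℂ) * ((U.filter fun S => e ⊆ S).card : ℂ))))
      = ∑ U ∈ (KK n k).powerset, (-1 : ℂ) ^ ((m + 1) * (U.card : ℤ)) *
          ∑ T ∈ (EE n).powerset, Complex.exp ((∑ e ∈ EE n, (chi T e : ℂ) *
            ((θ * (A + m * ((U.filter fun S => e ⊆ S).card : ℝ)) : ℝ) : ℂ)) * Complex.I) := by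
        refine Finset.sum_congr rfl fun U _ => ?_
        rw [← cos_prod (x := fun e => θ * (A + m * ((U.filter fun S => e ⊆ S).card : ℝ)))]
        push_cast
        ring
    _ = ∑ U ∈ (KK n k).powerset, ∑ T ∈ (EE n).powerset,
          Complex.exp ((θ:ℂ)*(A:ℂ)*(sig T:ℂ)*Complex.I) *
          ∏ S ∈ U, ((-1:ℂ)^(m+1) * Complex.exp ((θ:ℂ)*(m:ℂ)*(ww T S:ℂ)*Complex.I)) := by
        refine Finset.sum_congr rfl fun U hU => ?_
        rw [Finset.mul_sum]
        refine Finset.sum_congr rfl fun T hT => ?_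
        rw [phase_split,
          add_mul ((θ:ℂ)*(A:ℂ)*(sig T:ℂ)) ((θ:ℂ)*(m:ℂ)*(∑ S ∈ U, (ww T S:ℂ))) Complex.I,
          Complex.exp_add]
        have h2 : ((θ:ℂ)*(m:ℂ)*(∑ S ∈ U, (ww T S:ℂ)))*Complex.I
            = ∑ S ∈ U, (θ:ℂ)*(m:ℂ)*(ww T S:ℂ)*Complex.I := by
          rw [Finset.mul_sum, Finset.sum_mul]
        rw [h2, Complex.exp_sum]
        have h3 : (-1:ℂ)^((m+1)*(U.card:ℤ)) = ∏ _S ∈ U, (-1:ℂ)^(m+1) := by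
          rw [Finset.prod_const, zpow_mul, zpow_natCast]
        rw [h3, mul_comm, mul_assoc, ← Finset.prod_mul_distrib]
        exact congrArg _ (Finset.prod_congr rfl fun S _ => mul_comm _ _)
    _ = ∑ T ∈ (EE n).powerset,
        Complex.exp ((θ : ℂ) * (A : ℂ) * (sig T : ℂ) * Complex.I) *
        ∏ S ∈ KK n k, (1 + (-1:ℂ)^(m+1) * Complex.exp ((θ:ℂ) * (m:ℂ) * (ww T S : ℂ) * Complex.I)) := by
        rw [Finset.sum_comm]
        refine Finset.sum_congr rfl fun T _ => ?_
        rw [← Finset.mul_sum, sum_powerset_prod]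


lemma theta_mul_J {k : ℕ} (hk : 2 ≤ k) :
    (2 * Real.pi / ((k : ℝ) * ((k : ℝ) - 1))) * ((k.choose 2 : ℕ) : ℝ) = Real.pi := by
  have h1 : ((k.choose 2 : ℕ) : ℝ) = (k : ℝ) * ((k : ℝ) - 1) / 2 := Nat.cast_choose_two ℝ k
  have h2 : (k : ℝ) * ((k : ℝ) - 1) ≠ 0 := by
    have : (2 : ℝ) ≤ (k : ℝ) := by exact_mod_cast hk
    nlinarith
  rw [h1]; field_simp; exact div_self (by intro h; apply h2; rw [h, mul_zero])

lemma neg_one_pow_succ_mul (m : ℤ) : (-1:ℂ)^(m+1) * (-1:ℂ)^m = -1 := by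
  rw [← zpow_add₀ (by norm_num : (-1:ℂ) ≠ 0)]
  have h : m + 1 + m = 2*m + 1 := by ring
  rw [h, zpow_add₀ (by norm_num : (-1:ℂ) ≠ 0), zpow_mul]
  norm_num

lemma neg_one_pow_succ_mul_neg (m : ℤ) : (-1:ℂ)^(m+1) * (-1:ℂ)^(-m) = -1 := by
  rw [← zpow_add₀ (by norm_num : (-1:ℂ) ≠ 0)]
  have h : m + 1 + -m = 1 := by ring
  rw [h, zpow_one]

/-- From a 2-subset of S get its two distinct elements in S. -/
lemma pair_of_mem_pc2 {S e : Finset (Fin n)} (he : e ∈ powersetCard 2 S) :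
    ∃ i j : Fin n, i ≠ j ∧ i ∈ S ∧ j ∈ S ∧ e = {i, j} := by
  rw [Finset.mem_powersetCard] at he
  obtain ⟨i, j, hij, rfl⟩ := Finset.card_eq_two.1 he.2
  exact ⟨i, j, hij, he.1 (by simp), he.1 (by simp), rfl⟩

/-- Forward: Ramsey property makes each T-factor vanish. -/
lemma factor_vanishes {k : ℕ} (hk : 2 ≤ k) (hkn : k ≤ n) (hR : RamP k n)
    (T : Finset (Finset (Fin n))) (m : ℤ) :
    ∃ S ∈ KK n k, (1 + (-1:ℂ)^(m+1) *
      Complex.exp (((2 * Real.pi / ((k : ℝ) * ((k : ℝ) - 1)) : ℝ):ℂ) * (m:ℂ) * (ww T S : ℂ)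
        * Complex.I)) = 0 := by
  classical
  set θ : ℝ := 2 * Real.pi / ((k : ℝ) * ((k : ℝ) - 1)) with hθ
  have hθJ : (θ:ℂ) * ((k.choose 2 : ℕ) : ℂ) = (Real.pi : ℂ) := by
    have h := congrArg (fun x : ℝ => (x:ℂ)) (theta_mul_J hk)
    simp only [Complex.ofReal_mul, Complex.ofReal_natCast] at h
    rw [hθ]
    exact_mod_cast h
  set G : SimpleGraph (Fin n) := SimpleGraph.fromRel (fun i j => ({i,j} : Finset (Fin n)) ∈ T)
    with hG
  rcases hR G with ⟨s, hs⟩ | ⟨s, hs⟩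
  · refine ⟨s, by rw [Finset.mem_powersetCard_univ]; exact hs.card_eq, ?_⟩
    have hww : ww T s = (k.choose 2 : ℤ) := by
      apply ww_eq_top T hs.card_eq
      intro e he
      obtain ⟨i, j, hij, hiS, hjS, rfl⟩ := pair_of_mem_pc2 he
      have hadj := hs.isClique hiS hjS hij
      rw [hG] at hadj
      rcases hadj.2 with h | h
      · exact h
      · rwa [Finset.pair_comm]
    rw [hww]
    have harg : (θ:ℂ) * (m:ℂ) * (((k.choose 2 : ℤ)) : ℂ) * Complex.I
        = (m:ℂ) * ((Real.pi:ℂ) * Complex.I) := by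
      push_cast
      calc (θ:ℂ) * (m:ℂ) * ((k.choose 2 : ℕ):ℂ) * Complex.I
          = (m:ℂ) * (((θ:ℂ) * ((k.choose 2 : ℕ):ℂ)) * Complex.I) := by ring
        _ = (m:ℂ) * ((Real.pi:ℂ) * Complex.I) := by rw [hθJ]
    rw [harg, Complex.exp_int_mul, Complex.exp_pi_mul_I, neg_one_pow_succ_mul]
    ring
  · refine ⟨s, by rw [Finset.mem_powersetCard_univ]; exact hs.card_eq, ?_⟩
    have hww : ww T s = -(k.choose 2 : ℤ) := by
      apply ww_eq_bot T hs.card_eq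
      intro e he
      obtain ⟨i, j, hij, hiS, hjS, rfl⟩ := pair_of_mem_pc2 he
      have hadj := hs.isClique hiS hjS hij
      rw [SimpleGraph.compl_adj, hG] at hadj
      intro hmem
      exact hadj.2 ⟨hij, Or.inl hmem⟩
    rw [hww]
    have harg : (θ:ℂ) * (m:ℂ) * ((-(k.choose 2 : ℤ) : ℤ) : ℂ) * Complex.I
        = (((-m : ℤ)):ℂ) * ((Real.pi:ℂ) * Complex.I) := by
      push_cast
      calc (θ:ℂ) * (m:ℂ) * (-((k.choose 2 : ℕ):ℂ)) * Complex.I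
          = -(m:ℂ) * (((θ:ℂ) * ((k.choose 2 : ℕ):ℂ)) * Complex.I) := by ring
        _ = -(m:ℂ) * ((Real.pi:ℂ) * Complex.I) := by rw [hθJ]
    rw [harg, Complex.exp_int_mul, Complex.exp_pi_mul_I, neg_one_pow_succ_mul_neg]
    ring


/-- Half-angle factorization in ℂ. -/
lemma one_add_exp (φ : ℝ) :
    1 + Complex.exp ((φ:ℂ) * Complex.I)
      = Complex.exp (((φ/2 : ℝ):ℂ) * Complex.I) * ((2 * Real.cos (φ/2) : ℝ) : ℂ) := by
  have h : ((2 * Real.cos (φ/2) : ℝ) : ℂ) = Complex.exp (((φ/2:ℝ):ℂ) * Complex.I)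
      + Complex.exp (-(((φ/2:ℝ):ℂ)) * Complex.I) := by
    push_cast
    rw [Complex.cos]
    ring
  rw [h, mul_add, ← Complex.exp_add, ← Complex.exp_add]
  have h1 : ((φ/2:ℝ):ℂ) * Complex.I + ((φ/2:ℝ):ℂ) * Complex.I = (φ:ℂ) * Complex.I := by
    push_cast; ring
  have h2 : ((φ/2:ℝ):ℂ) * Complex.I + -(((φ/2:ℝ):ℂ)) * Complex.I = 0 := by ring
  rw [h1, h2, Complex.exp_zero]
  ring

/-- The T-term at m = 1, q = -1/2 is a nonnegative real. -/
lemma term_eq_real {k : ℕ} (hk : 2 ≤ k) (hkn : k ≤ n) (T : Finset (Finset (Fin n))) :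
    Complex.exp (((2 * Real.pi / ((k : ℝ) * ((k : ℝ) - 1)) : ℝ):ℂ)
        * (((-(1/2) * ((n-2).choose (k-2) : ℝ)) : ℝ) : ℂ) * (sig T : ℂ) * Complex.I) *
      ∏ S ∈ KK n k, (1 + Complex.exp (((2 * Real.pi / ((k : ℝ) * ((k : ℝ) - 1)) : ℝ):ℂ)
        * (ww T S : ℂ) * Complex.I))
    = ((∏ S ∈ KK n k, (2 * Real.cos ((2 * Real.pi / ((k : ℝ) * ((k : ℝ) - 1)))
        * (ww T S : ℝ) / 2)) : ℝ) : ℂ) := by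
  set θ : ℝ := 2 * Real.pi / ((k : ℝ) * ((k : ℝ) - 1)) with hθ
  have hfac : ∀ S ∈ KK n k, (1 + Complex.exp ((θ:ℂ) * (ww T S : ℂ) * Complex.I))
      = Complex.exp (((θ * (ww T S : ℝ) / 2 : ℝ):ℂ) * Complex.I)
        * ((2 * Real.cos (θ * (ww T S : ℝ) / 2) : ℝ) : ℂ) := by
    intro S _
    have := one_add_exp (θ * (ww T S : ℝ))
    rw [show ((θ * (ww T S :ℝ) : ℝ):ℂ) = (θ:ℂ) * (ww T S : ℂ) by push_cast; ring] at this
    exact this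
  rw [Finset.prod_congr rfl hfac, Finset.prod_mul_distrib, ← Complex.exp_sum]
  have hsum : ∑ S ∈ KK n k, ((θ * (ww T S : ℝ) / 2 : ℝ):ℂ) * Complex.I
      = ((θ/2 : ℝ):ℂ) * ((((n-2).choose (k-2) : ℤ) * sig T : ℤ) : ℂ) * Complex.I := by
    rw [← sum_ww hk hkn T]
    push_cast
    rw [Finset.mul_sum, Finset.sum_mul]
    refine Finset.sum_congr rfl fun S _ => by ring
  rw [hsum, ← mul_assoc, ← Complex.exp_add]
  have hzero : (θ:ℂ) * (((-(1/2) * ((n-2).choose (k-2) : ℝ)) : ℝ) : ℂ) * (sig T : ℂ) * Complex.I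
      + ((θ/2 : ℝ):ℂ) * ((((n-2).choose (k-2) : ℤ) * sig T : ℤ) : ℂ) * Complex.I = 0 := by
    push_cast
    ring
  rw [hzero, Complex.exp_zero, one_mul]
  rw [Complex.ofReal_prod]

lemma theta_pos {k : ℕ} (hk : 2 ≤ k) : 0 < 2 * Real.pi / ((k : ℝ) * ((k : ℝ) - 1)) := by
  apply div_pos (by positivity)
  have : (2:ℝ) ≤ (k:ℝ) := by exact_mod_cast hk
  nlinarith

lemma cos_factor_nonneg {k : ℕ} (hk : 2 ≤ k) {w : ℤ} (hw : |w| ≤ (k.choose 2 : ℤ)) :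
    0 ≤ 2 * Real.cos ((2 * Real.pi / ((k : ℝ) * ((k : ℝ) - 1))) * (w : ℝ) / 2) := by
  set θ : ℝ := 2 * Real.pi / ((k : ℝ) * ((k : ℝ) - 1)) with hθ
  have hJ := theta_mul_J hk
  have hθpos := theta_pos hk
  have hwR : |(w:ℝ)| ≤ ((k.choose 2 : ℕ) : ℝ) := by exact_mod_cast hw
  have habs : |θ * (w:ℝ) / 2| ≤ Real.pi / 2 := by
    rw [abs_div, abs_mul, abs_of_pos hθpos]
    rw [show |(2:ℝ)| = 2 by norm_num]
    have : θ * |(w:ℝ)| ≤ θ * ((k.choose 2 : ℕ) : ℝ) := by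
      apply mul_le_mul_of_nonneg_left hwR (le_of_lt hθpos)
    rw [← hθ] at hJ
    linarith [this, hJ.le, hJ.ge]
  apply mul_nonneg (by norm_num)
  apply Real.cos_nonneg_of_mem_Icc
  constructor
  · linarith [abs_le.1 habs |>.1]
  · linarith [abs_le.1 habs |>.2]

lemma cos_factor_pos {k : ℕ} (hk : 2 ≤ k) {w : ℤ} (hw1 : w < (k.choose 2 : ℤ))
    (hw2 : -(k.choose 2 : ℤ) < w) :
    0 < 2 * Real.cos ((2 * Real.pi / ((k : ℝ) * ((k : ℝ) - 1))) * (w : ℝ) / 2) := by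
  set θ : ℝ := 2 * Real.pi / ((k : ℝ) * ((k : ℝ) - 1)) with hθ
  have hJ := theta_mul_J hk
  rw [← hθ] at hJ
  have hθpos := theta_pos hk
  rw [← hθ] at hθpos
  have hw1R : (w:ℝ) < ((k.choose 2 : ℕ) : ℝ) := by exact_mod_cast hw1
  have hw2R : -((k.choose 2 : ℕ) : ℝ) < (w:ℝ) := by exact_mod_cast hw2
  apply mul_pos (by norm_num)
  apply Real.cos_pos_of_mem_Ioo
  constructor
  · have := mul_lt_mul_of_pos_left hw2R hθpos
    rw [mul_neg, hJ] at this
    linarith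
  · have := mul_lt_mul_of_pos_left hw1R hθpos
    rw [hJ] at this
    linarith



lemma forward_zero {n k : ℕ} (hk : 2 ≤ k) (hkn : k ≤ n) (hR : RamP k n) (q : ℝ) (m : ℤ) :
    (∑ U ∈ (KK n k).powerset, (-1 : ℝ) ^ ((m + 1) * (U.card : ℤ)) *
      ∏ e ∈ EE n, Real.cos (2 * Real.pi / ((k : ℝ) * ((k : ℝ) - 1)) *
        (q * ((n - 2).choose (k - 2) : ℝ) +
          (m : ℝ) * ((U.filter fun S => e ⊆ S).card : ℝ)))) = 0 := by
  have hid := main_identity (n := n) k (2 * Real.pi / ((k : ℝ) * ((k : ℝ) - 1)))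
    (q * ((n - 2).choose (k - 2) : ℝ)) m
  have h2 : ((2:ℂ)^((EE n).card)) ≠ 0 := pow_ne_zero _ two_ne_zero
  rw [← Complex.ofReal_eq_zero]
  refine (mul_eq_zero.mp ?_).resolve_left h2
  rw [hid]
  refine Finset.sum_eq_zero fun T _ => ?_
  obtain ⟨S, hS, h0⟩ := factor_vanishes hk hkn hR T m
  rw [Finset.prod_eq_zero hS h0, mul_zero]

lemma backward_ne {n k : ℕ} (hk : 2 ≤ k) (hkn : k ≤ n) (hnR : ¬ RamP k n)
    (hX : (∑ U ∈ (KK n k).powerset, (-1 : ℝ) ^ (((1:ℤ) + 1) * (U.card : ℤ)) *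
      ∏ e ∈ EE n, Real.cos (2 * Real.pi / ((k : ℝ) * ((k : ℝ) - 1)) *
        (-(1/2 : ℝ) * ((n - 2).choose (k - 2) : ℝ) +
          (((1:ℤ)) : ℝ) * ((U.filter fun S => e ⊆ S).card : ℝ)))) = 0) : False := by
  classical
  rw [RamP] at hnR
  push_neg at hnR
  obtain ⟨G, hG1, hG2⟩ := hnR
  set θ : ℝ := 2 * Real.pi / ((k : ℝ) * ((k : ℝ) - 1)) with hθ
  set T0 : Finset (Finset (Fin n)) :=
    (EE n).filter (fun e => ∀ i ∈ e, ∀ j ∈ e, i ≠ j → G.Adj i j) with hT0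
  have hid := main_identity (n := n) k θ (-(1/2 : ℝ) * ((n - 2).choose (k - 2) : ℝ)) 1
  have hterm : ∀ T ∈ (EE n).powerset,
      Complex.exp ((θ:ℂ) * ((-(1/2 : ℝ) * ((n - 2).choose (k - 2) : ℝ) : ℝ):ℂ)
          * (sig T : ℂ) * Complex.I) *
        ∏ S ∈ KK n k, (1 + (-1:ℂ)^((1:ℤ)+1)
          * Complex.exp ((θ:ℂ) * (((1:ℤ)):ℂ) * (ww T S : ℂ) * Complex.I))
      = ((∏ S ∈ KK n k, (2 * Real.cos (θ * (ww T S : ℝ) / 2)) : ℝ) : ℂ) := by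
    intro T _
    have h1 : ∀ S ∈ KK n k, (1 + (-1:ℂ)^((1:ℤ)+1)
        * Complex.exp ((θ:ℂ) * (((1:ℤ)):ℂ) * (ww T S : ℂ) * Complex.I))
        = (1 + Complex.exp ((θ:ℂ) * (ww T S : ℂ) * Complex.I)) := by
      intro S _
      norm_num
    rw [Finset.prod_congr rfl h1]
    exact term_eq_real hk hkn T
  rw [Finset.sum_congr rfl hterm, ← Complex.ofReal_sum, hX] at hid
  have hsum0 : (∑ T ∈ (EE n).powerset, ∏ S ∈ KK n k,
      (2 * Real.cos (θ * (ww T S : ℝ) / 2))) = 0 := by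
    have h := hid.symm
    rw [Complex.ofReal_zero, mul_zero] at h
    exact_mod_cast h
  have hpos : 0 < ∑ T ∈ (EE n).powerset, ∏ S ∈ KK n k,
      (2 * Real.cos (θ * (ww T S : ℝ) / 2)) := by
    apply Finset.sum_pos'
    · intro T _
      apply Finset.prod_nonneg
      intro S hS
      have hSk : S.card = k := Finset.mem_powersetCard_univ.mp hS
      exact cos_factor_nonneg hk (ww_le T hSk)
    · refine ⟨T0, Finset.mem_powerset.mpr (Finset.filter_subset _ _), ?_⟩
      apply Finset.prod_pos
      intro S hS
      have hSk : S.card = k := Finset.mem_powersetCard_univ.mp hS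
      apply cos_factor_pos hk
      · -- ww T0 S < J : not all edges present
        apply ww_lt_top T0 hSk
        by_contra hc
        push_neg at hc
        refine hG1 S ⟨?_, hSk⟩
        intro i hi j hj hij
        rw [Finset.mem_coe] at hi hj
        have hmem : ({i, j} : Finset (Fin n)) ∈ powersetCard 2 S := by
          rw [Finset.mem_powersetCard]
          refine ⟨?_, Finset.card_pair hij⟩
          intro x hx
          rcases Finset.mem_insert.mp hx with rfl | hx
          · exact hi
          · rw [Finset.mem_singleton] at hx; subst hx; exact hj
        have := hc _ hmem
        rw [hT0, Finset.mem_filter] at this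
        exact this.2 i (by simp) j (by simp) hij
      · -- -J < ww T0 S : not all edges absent
        apply ww_gt_bot T0 hSk
        by_contra hc
        push_neg at hc
        refine hG2 S ⟨?_, hSk⟩
        intro i hi j hj hij
        rw [Finset.mem_coe] at hi hj
        rw [SimpleGraph.compl_adj]
        refine ⟨hij, fun hadj => ?_⟩
        have hmem : ({i, j} : Finset (Fin n)) ∈ powersetCard 2 S := by
          rw [Finset.mem_powersetCard]
          refine ⟨?_, Finset.card_pair hij⟩
          intro x hx
          rcases Finset.mem_insert.mp hx with rfl | hx
          · exact hi
          · rw [Finset.mem_singleton] at hx; subst hx; exact hj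
        apply hc _ hmem
        rw [hT0, Finset.mem_filter]
        refine ⟨?_, ?_⟩
        · rw [Finset.mem_powersetCard_univ]; exact Finset.card_pair hij
        · intro a ha b hb hab
          have ha' : a = i ∨ a = j := by
            rcases Finset.mem_insert.mp ha with h | h
            · exact Or.inl h
            · exact Or.inr (Finset.mem_singleton.mp h)
          have hb' : b = i ∨ b = j := by
            rcases Finset.mem_insert.mp hb with h | h
            · exact Or.inl h
            · exact Or.inr (Finset.mem_singleton.mp h)
          rcases ha' with rfl | rfl <;> rcases hb' with rfl | rfl
          · exact absurd rfl hab
          · exact hadj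
          · exact hadj.symm
          · exact absurd rfl hab
  exact hpos.ne' hsum0

end RamseyAux


lemma diagonalRamsey_le_iff_s2 {k n : ℕ} (hn : 0 < n) :
    diagonalRamsey k ≤ n ↔ RamseyAux.RamP k n := by
  have hne : {n : ℕ | 0 < n ∧ ∀ G : SimpleGraph (Fin n),
      (∃ s : Finset (Fin n), G.IsNClique k s) ∨
      (∃ s : Finset (Fin n), Gᶜ.IsNClique k s)}.Nonempty := by
    obtain ⟨N, hN⟩ := RamseyAux.ramsey_exists k k
    refine ⟨max N 1, by omega, ?_⟩
    intro G
    exact hN (Fin (max N 1)) G (by simp)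
  constructor
  · intro hle
    have hmem := Nat.sInf_mem hne
    exact RamseyAux.ramP_mono hle hmem.2
  · intro hP
    exact Nat.sInf_le ⟨hn, hP⟩

theorem stmt_2 (n k : ℕ) (hk : 2 ≤ k) (hkn : k ≤ n) :
    diagonalRamsey k ≤ n ↔
      ∀ (q : ℝ) (m : ℤ),
        (∑ U ∈ (Finset.powersetCard k (Finset.univ : Finset (Fin n))).powerset,
          (-1 : ℝ) ^ ((m + 1) * (U.card : ℤ)) *
            ∏ e ∈ Finset.powersetCard 2 (Finset.univ : Finset (Fin n)),
              Real.cos (2 * Real.pi / ((k : ℝ) * ((k : ℝ) - 1)) *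
                (q * ((n - 2).choose (k - 2) : ℝ) +
                  (m : ℝ) * ((U.filter fun S => e ⊆ S).card : ℝ)))) = 0 := by
  rw [diagonalRamsey_le_iff_s2 (by omega : 0 < n)]
  constructor
  · intro hR q m
    exact RamseyAux.forward_zero hk hkn hR q m
  · intro hRHS
    by_contra hnR
    exact RamseyAux.backward_ne hk hkn hnR (hRHS (-(1/2)) 1)
end
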